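/- arXiv:1501.03638 — 6 statements merged into one kernel-verified Lean document; each statement's English description precedes it below -/
import Mathlib

section
/- Let α, β > 0 and let μ_{α,β} be the Bessel distribution with parameters α, β. Then for every u ∈ ℂ with Re u ≤ 0, ∫_{[0,∞)} e^{u x} μ_{α,β}(dx) = exp(α u/(β − u)). -/
open MeasureTheory Set

noncomputable section

/-- Modified Bessel function of the first kind of order 1. -/
def besselI1 (r : ℝ) : ℝ :=
  (r / 2) * ∑' k : ℕ, (r ^ 2 / 4) ^ k / (Nat.factorial k * Nat.factorial (k + 1))

/-- Modified Bessel function of the first kind of order `q` (for `r > 0`). -/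
def besselI (q r : ℝ) : ℝ :=
  (r / 2) ^ q * ∑' k : ℕ, (r ^ 2 / 4) ^ k / (Nat.factorial k * Real.Gamma (q + k + 1))

/-- Density part of the Bessel distribution with parameters `α, β` (for `x > 0`). -/
def besselDensity (α β x : ℝ) : ℝ :=
  β * Real.exp (-α - β * x) * Real.sqrt (α / (β * x)) * besselI1 (2 * Real.sqrt (α * β * x))

/-- The Bessel distribution `μ_{α,β}` on `[0,∞)`. -/
def besselMeasure (α β : ℝ) : Measure ℝ :=
  ENNReal.ofReal (Real.exp (-α)) • Measure.dirac 0 +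
    volume.withDensity fun x => ENNReal.ofReal (Set.indicator (Set.Ioi 0) (besselDensity α β) x)

/-- The mixture of Bessel distributions `m_{α,β,γ}`, mixing `μ_{αt,β}` over `t`
with Gamma(`γ`, 1) weights. -/
def besselMixture (α β γ : ℝ) : Measure ℝ :=
  (ProbabilityTheory.gammaMeasure γ 1).bind fun t => besselMeasure (α * t) β

/-- Density of the Gamma distribution with shape `k` and rate `r`. -/
def gammaDens (k r x : ℝ) : ℝ :=
  r ^ k * x ^ (k - 1) * Real.exp (-r * x) / Real.Gamma k

/-- The density `g_{α,β,γ}`, a mixture of Gamma densities. -/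
def gMix (α β γ x : ℝ) : ℝ :=
  ∑' k : ℕ, α ^ (k + 1) * Real.Gamma ((k + 1 : ℕ) + γ) /
      ((α + 1) ^ ((k + 1 : ℕ) + γ) * Real.Gamma γ * Nat.factorial (k + 1)) *
    gammaDens (k + 1 : ℕ) β x

/-- Transition density of the CIR process with parameters `a, θ, σ`. -/
def cirDensity (a θ σ : ℝ) (t x y : ℝ) : ℝ :=
  let ρ : ℝ := 2 * a / (σ ^ 2 * (1 - Real.exp (-a * t)))
  let q : ℝ := 2 * a * θ / σ ^ 2 - 1
  let v : ℝ := ρ * y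
  if x = 0 then ρ * v ^ q * Real.exp (-v) / Real.Gamma (q + 1)
  else
    let u : ℝ := ρ * x * Real.exp (-a * t)
    ρ * Real.exp (-u - v) * (v / u) ^ (q / 2) * besselI q (2 * Real.sqrt (u * v))

/-- The function `L₁(t) = e^{-at} + (σ²d/(2a))(1 - e^{-at})`. -/
def L1 (a σ d t : ℝ) : ℝ :=
  Real.exp (-a * t) + σ ^ 2 * d / (2 * a) * (1 - Real.exp (-a * t))

/-- The jump part `h(t,z)` of the BAJD transition density. -/
def bajdJump (a σ c d : ℝ) (t z : ℝ) : ℝ :=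
  if 0 < a - σ ^ 2 * d / 2 then
    gMix (1 / L1 a σ d t - 1) (d / L1 a σ d t) (c / (a - σ ^ 2 * d / 2)) z
  else if a - σ ^ 2 * d / 2 < 0 then
    gMix (L1 a σ d t - 1) d (-c / (a - σ ^ 2 * d / 2)) z
  else
    d * Real.exp (-((c / a) * (1 - Real.exp (-a * t))) - d * z) *
      Real.sqrt ((c / a) * (1 - Real.exp (-a * t)) / (d * z)) *
      besselI1 (2 * Real.sqrt ((c / a) * (1 - Real.exp (-a * t)) * d * z))

/-- Transition density of the basic affine jump-diffusion. -/
def bajdDensity (a θ σ c d : ℝ) (t x y : ℝ) : ℝ :=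
  (if a - σ ^ 2 * d / 2 = 0 then Real.exp (-((c / a) * (1 - Real.exp (-a * t))))
    else L1 a σ d t ^ (c / (a - σ ^ 2 * d / 2))) * cirDensity a θ σ t x y +
  ∫ z in (0 : ℝ)..y, cirDensity a θ σ t x (y - z) * bajdJump a σ c d t z

/-- The limit jump part `h∞(z)` appearing in the invariant density of the BAJD. -/
def bajdJumpInf (a σ c d : ℝ) (z : ℝ) : ℝ :=
  if 0 < a - σ ^ 2 * d / 2 then
    gMix (2 * a / (σ ^ 2 * d) - 1) (2 * a / σ ^ 2) (c / (a - σ ^ 2 * d / 2)) z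
  else if a - σ ^ 2 * d / 2 < 0 then
    gMix (σ ^ 2 * d / (2 * a) - 1) d (-c / (a - σ ^ 2 * d / 2)) z
  else
    d * Real.exp (-(c / a) - d * z) * Real.sqrt (c / (a * d * z)) *
      besselI1 (2 * Real.sqrt (c * d * z / a))

/-- Density of the unique invariant probability measure of the BAJD. -/
def invDensity (a θ σ c d : ℝ) (y : ℝ) : ℝ :=
  (if a - σ ^ 2 * d / 2 = 0 then Real.exp (-(c / a))
    else (σ ^ 2 * d / (2 * a)) ^ (c / (a - σ ^ 2 * d / 2))) *
    gammaDens (2 * a * θ / σ ^ 2) (2 * a / σ ^ 2) y +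
  ∫ z in (0 : ℝ)..y, gammaDens (2 * a * θ / σ ^ 2) (2 * a / σ ^ 2) (y - z) * bajdJumpInf a σ c d z

end

section Aux

open Filter

namespace BesselAux

lemma norm_aux (s : ℂ) (k : ℕ) {x : ℝ} (hx : 0 ≤ x) :
    ‖(x:ℂ)^k * Complex.exp (-(s*x))‖ = x^k * Real.exp (-(s.re*x)) := by
  rw [norm_mul, norm_pow, Complex.norm_exp,
    Complex.norm_real, Real.norm_eq_abs, abs_of_nonneg hx]
  congr 2
  simp

lemma integrableOn_real_aux {b : ℝ} (hb : 0 < b) (k : ℕ) :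
    IntegrableOn (fun x : ℝ => x^k * Real.exp (-(b*x))) (Ioi 0) := by
  have := integrableOn_rpow_mul_exp_neg_mul_rpow (p := 1) (s := k) (b := b)
    (lt_of_lt_of_le (by norm_num) (Nat.cast_nonneg k)) one_pos hb
  simpa [Real.rpow_natCast, Real.rpow_one] using this

lemma integrableOn_aux {s : ℂ} (hs : 0 < s.re) (k : ℕ) :
    IntegrableOn (fun x : ℝ => (x:ℂ)^k * Complex.exp (-(s*x))) (Ioi 0) := by
  apply Integrable.mono' (integrableOn_real_aux hs k)
  · exact (Continuous.aestronglyMeasurable (by fun_prop)).restrict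
  · filter_upwards [ae_restrict_mem measurableSet_Ioi] with x hx
    rw [norm_aux s k (le_of_lt hx)]

lemma tendsto_aux {s : ℂ} (hs : 0 < s.re) (k : ℕ) :
    Tendsto (fun x : ℝ => (x:ℂ)^k * Complex.exp (-(s*x))) atTop (nhds 0) := by
  rw [tendsto_zero_iff_norm_tendsto_zero]
  have h := tendsto_rpow_mul_exp_neg_mul_atTop_nhds_zero k s.re hs
  apply Tendsto.congr' _ h
  filter_upwards [eventually_ge_atTop (0:ℝ)] with x hx
  rw [norm_aux s k hx, Real.rpow_natCast]
  ring_nf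

lemma hasDerivAt_exp_aux (s : ℂ) (x : ℝ) :
    HasDerivAt (fun x : ℝ => Complex.exp (-(s*x))) (-s * Complex.exp (-(s*x))) x := by
  have h : HasDerivAt (fun z : ℂ => Complex.exp (-(s*z))) (-s * Complex.exp (-(s*(x:ℂ)))) (x:ℂ) := by
    have := (((hasDerivAt_id (x:ℂ)).const_mul s).neg).cexp
    refine this.congr_deriv ?_
    simp [mul_comm]
  exact h.comp_ofReal

lemma hasDerivAt_aux (s : ℂ) (k : ℕ) (x : ℝ) :
    HasDerivAt (fun x : ℝ => (x:ℂ)^(k+1) * Complex.exp (-(s*x)))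
      (((k:ℂ)+1) * ((x:ℂ)^k * Complex.exp (-(s*x))) - s * ((x:ℂ)^(k+1) * Complex.exp (-(s*x)))) x := by
  have h1 : HasDerivAt (fun x : ℝ => (x:ℂ)^(k+1)) (((k:ℂ)+1) * (x:ℂ)^k) x := by
    have := (hasDerivAt_pow (k+1) (x:ℂ)).comp_ofReal
    simpa using this
  have := h1.mul (hasDerivAt_exp_aux s x)
  refine this.congr_deriv ?_
  ring

lemma integral_aux {s : ℂ} (hs : 0 < s.re) : ∀ k : ℕ,
    ∫ x in Ioi (0:ℝ), (x:ℂ)^k * Complex.exp (-(s*x)) = (Nat.factorial k) / s^(k+1) := by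
  have hs0 : s ≠ 0 := fun h => by simp [h] at hs
  intro k
  induction k with
  | zero =>
    have hd : ∀ x ∈ Ioi (0:ℝ), HasDerivAt (fun x : ℝ => -s⁻¹ * Complex.exp (-(s*x)))
        ((x:ℂ)^0 * Complex.exp (-(s*x))) x := by
      intro x _
      have := (hasDerivAt_exp_aux s x).const_mul (-s⁻¹)
      refine this.congr_deriv ?_
      field_simp
    have hcont : ContinuousWithinAt (fun x : ℝ => -s⁻¹ * Complex.exp (-(s*x))) (Ici 0) 0 :=
      Continuous.continuousWithinAt (by fun_prop)
    have := integral_Ioi_of_hasDerivAt_of_tendsto (f := fun x : ℝ => -s⁻¹ * Complex.exp (-(s*x)))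
      (a := 0) (m := 0) hcont hd (integrableOn_aux hs 0) ?_
    · rw [this]; simp [one_div]
    · have := (tendsto_aux hs 0).const_mul (-s⁻¹)
      simpa using this
  | succ k ih =>
    have hcont : ContinuousWithinAt (fun x : ℝ => (x:ℂ)^(k+1) * Complex.exp (-(s*x))) (Ici 0) 0 :=
      Continuous.continuousWithinAt (by fun_prop)
    have h0 := integral_Ioi_of_hasDerivAt_of_tendsto
      (f := fun x : ℝ => (x:ℂ)^(k+1) * Complex.exp (-(s*x))) (a := 0) (m := 0)
      hcont (fun x _ => hasDerivAt_aux s k x)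
      (((integrableOn_aux hs k).const_mul _).sub ((integrableOn_aux hs (k+1)).const_mul _))
      (tendsto_aux hs (k+1))
    rw [integral_sub ((integrableOn_aux hs k).const_mul _) ((integrableOn_aux hs (k+1)).const_mul _),
      integral_const_mul, integral_const_mul, ih] at h0
    have hz : (fun x : ℝ => (x:ℂ)^(k+1) * Complex.exp (-(s*x))) 0 = 0 := by simp
    rw [show ((0:ℝ):ℂ)^(k+1) * Complex.exp (-(s*((0:ℝ):ℂ))) = 0 from hz] at h0
    have hsp : s^(k+1) ≠ 0 := pow_ne_zero _ hs0
    have hsp2 : s^(k+1+1) ≠ 0 := pow_ne_zero _ hs0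
    field_simp at h0
    rw [eq_div_iff hsp2, Nat.factorial_succ]
    push_cast
    linear_combination -h0

lemma real_integral_aux {b : ℝ} (hb : 0 < b) (k : ℕ) :
    ∫ x in Ioi (0:ℝ), x^k * Real.exp (-(b*x)) = (Nat.factorial k) / b^(k+1) := by
  have h := Real.integral_rpow_mul_exp_neg_mul_Ioi (a := (k:ℝ)+1) (r := b) (by positivity) hb
  have heq : (fun t : ℝ => t ^ ((k:ℝ)+1-1) * Real.exp (-(b*t)))
      = fun t : ℝ => t^k * Real.exp (-(b*t)) := by
    funext t
    rw [add_sub_cancel_right, Real.rpow_natCast]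
  rw [heq] at h
  rw [h, Real.Gamma_nat_eq_factorial,
    show (k:ℝ)+1 = ((k+1 : ℕ):ℝ) by push_cast; ring, Real.rpow_natCast]
  rw [div_pow, one_pow]
  ring

lemma measurable_tsum_aux {f : ℕ → ℝ → ℝ} (hf : ∀ n, Measurable (f n))
    (h : ∀ x, Summable fun n => f n x) : Measurable (fun x => ∑' n, f n x) := by
  apply measurable_of_tendsto_metrizable
    (f := fun n : ℕ => fun x => ∑ i ∈ Finset.range n, f i x)
    (fun n => Finset.measurable_sum _ fun i _ => hf i)
  rw [tendsto_pi_nhds]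
  intro x
  exact (h x).hasSum.tendsto_sum_nat

lemma summable_series_aux {y : ℝ} (hy : 0 ≤ y) :
    Summable fun k : ℕ => y^k / ((Nat.factorial k : ℝ) * (Nat.factorial (k+1) : ℝ)) := by
  apply Summable.of_nonneg_of_le (fun k => by positivity) (fun k => ?_)
    (Real.summable_pow_div_factorial y)
  apply div_le_div_of_nonneg_left (by positivity) (by positivity)
  exact le_mul_of_one_le_right (by positivity) (by exact_mod_cast Nat.one_le_iff_ne_zero.mpr (Nat.factorial_ne_zero _))

lemma measurable_besselI1 : Measurable besselI1 := by
  unfold besselI1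
  apply Measurable.mul (by fun_prop)
  apply measurable_tsum_aux (fun n => by fun_prop)
  intro r
  exact summable_series_aux (by positivity)

lemma measurable_besselDensity (α β : ℝ) : Measurable (besselDensity α β) := by
  unfold besselDensity
  apply Measurable.mul
  apply Measurable.mul
  · fun_prop
  · exact Real.continuous_sqrt.measurable.comp (by fun_prop)
  · exact measurable_besselI1.comp (by
      exact measurable_const.mul (Real.continuous_sqrt.measurable.comp (by fun_prop)))

lemma besselI1_nonneg {r : ℝ} (hr : 0 ≤ r) : 0 ≤ besselI1 r :=
  mul_nonneg (by positivity) (tsum_nonneg fun k => by positivity)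

lemma besselDensity_nonneg {α β : ℝ} (hβ : 0 ≤ β) (x : ℝ) : 0 ≤ besselDensity α β x := by
  unfold besselDensity
  have h1 : 0 ≤ besselI1 (2 * Real.sqrt (α * β * x)) :=
    besselI1_nonneg (by positivity)
  positivity

lemma besselDensity_eq {α β : ℝ} (hα : 0 < α) (hβ : 0 < β) {x : ℝ} (hx : 0 < x) :
    besselDensity α β x = ∑' k : ℕ,
      α * β * Real.exp (-α - β*x) * ((α*β*x)^k / ((Nat.factorial k : ℝ) * (Nat.factorial (k+1) : ℝ))) := by
  have hy : (0:ℝ) ≤ α*β*x := by positivity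
  rw [tsum_mul_left, besselDensity, besselI1]
  have h1 : 2 * Real.sqrt (α*β*x) / 2 = Real.sqrt (α*β*x) := by ring
  have h2 : (2 * Real.sqrt (α*β*x))^2 / 4 = α*β*x := by
    rw [mul_pow, Real.sq_sqrt hy]; ring
  rw [h1, h2]
  have h3 : Real.sqrt (α/(β*x)) * Real.sqrt (α*β*x) = α := by
    rw [← Real.sqrt_mul (by positivity), show α/(β*x)*(α*β*x) = α^2 by field_simp,
      Real.sqrt_sq hα.le]
  calc β * Real.exp (-α - β*x) * Real.sqrt (α/(β*x)) *
        (Real.sqrt (α*β*x) * ∑' k : ℕ, (α*β*x)^k / ((Nat.factorial k : ℝ) * (Nat.factorial (k+1) : ℝ)))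
      = (Real.sqrt (α/(β*x)) * Real.sqrt (α*β*x)) * (β * Real.exp (-α - β*x) *
          ∑' k : ℕ, (α*β*x)^k / ((Nat.factorial k : ℝ) * (Nat.factorial (k+1) : ℝ))) := by ring
    _ = _ := by rw [h3]; ring

end BesselAux

end Aux

open Filter BesselAux
open scoped NNReal ENNReal

section Main

namespace BesselAux

lemma summable_coef {α β b : ℝ} (hα : 0 < α) (hβ : 0 < β) (hb : 0 < b) :
    Summable fun k : ℕ =>
      (α*β*Real.exp (-α) * (α*β)^k / ((Nat.factorial k : ℝ) * (Nat.factorial (k+1) : ℝ)))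
        * ((Nat.factorial k : ℝ) / b^(k+1)) := by
  have h : Summable fun k : ℕ => Real.exp (-α) * ((α*β/b)^(k+1) / (Nat.factorial (k+1) : ℝ)) :=
    (((Real.summable_pow_div_factorial (α*β/b)).comp_injective Nat.succ_injective).mul_left _)
  apply h.congr
  intro k
  have h1 : (Nat.factorial k : ℝ) ≠ 0 := Nat.cast_ne_zero.mpr (Nat.factorial_ne_zero k)
  have h2 : (Nat.factorial (k+1) : ℝ) ≠ 0 := Nat.cast_ne_zero.mpr (Nat.factorial_ne_zero (k+1))
  have hb0 : b ≠ 0 := hb.ne'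
  rw [div_pow]
  field_simp
  ring

lemma integrableOn_besselDensity {α β : ℝ} (hα : 0 < α) (hβ : 0 < β) :
    IntegrableOn (besselDensity α β) (Ioi 0) := by
  constructor
  · exact (measurable_besselDensity α β).aestronglyMeasurable
  · rw [hasFiniteIntegral_iff_ofReal (ae_of_all _ fun x => besselDensity_nonneg hβ.le x)]
    have hcalc : ∫⁻ x in Ioi 0, ENNReal.ofReal (besselDensity α β x)
        = ∑' k : ℕ, ∫⁻ x in Ioi (0:ℝ), ENNReal.ofReal
            (α * β * Real.exp (-α - β*x) * ((α*β*x)^k / ((Nat.factorial k : ℝ) * (Nat.factorial (k+1) : ℝ)))) := by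
      have hmeas : ∀ k : ℕ, AEMeasurable (fun x : ℝ => ENNReal.ofReal
          (α * β * Real.exp (-α - β*x) * ((α*β*x)^k / ((Nat.factorial k : ℝ) * (Nat.factorial (k+1) : ℝ)))))
          (volume.restrict (Ioi 0)) := by
        intro k
        exact (Measurable.ennreal_ofReal (by fun_prop)).aemeasurable
      rw [← lintegral_tsum hmeas]
      apply setLIntegral_congr_fun measurableSet_Ioi
      intro x hx
      have hx' : (0:ℝ) < x := hx
      beta_reduce
      rw [besselDensity_eq hα hβ hx]
      rw [ENNReal.ofReal_tsum_of_nonneg (fun k => by positivity)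
        (((summable_series_aux (y := α*β*x) (by positivity)).mul_left _))]
    have hval : ∀ k : ℕ, ∫⁻ x in Ioi (0:ℝ), ENNReal.ofReal
        (α * β * Real.exp (-α - β*x) * ((α*β*x)^k / ((Nat.factorial k : ℝ) * (Nat.factorial (k+1) : ℝ))))
        = ENNReal.ofReal ((α*β*Real.exp (-α) * (α*β)^k / ((Nat.factorial k : ℝ) * (Nat.factorial (k+1) : ℝ)))
            * ((Nat.factorial k : ℝ) / β^(k+1))) := by
      intro k
      have h1 : (Nat.factorial k : ℝ) ≠ 0 := Nat.cast_ne_zero.mpr (Nat.factorial_ne_zero k)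
      have h2 : (Nat.factorial (k+1) : ℝ) ≠ 0 := Nat.cast_ne_zero.mpr (Nat.factorial_ne_zero (k+1))
      set c : ℝ := α*β*Real.exp (-α) * (α*β)^k / ((Nat.factorial k : ℝ) * (Nat.factorial (k+1) : ℝ)) with hc
      have hc0 : 0 ≤ c := by rw [hc]; positivity
      have heq : ∀ x ∈ Ioi (0:ℝ),
          ENNReal.ofReal (α * β * Real.exp (-α - β*x) * ((α*β*x)^k / ((Nat.factorial k : ℝ) * (Nat.factorial (k+1) : ℝ))))
          = ENNReal.ofReal (c * (x^k * Real.exp (-(β*x)))) := by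
        intro x hx
        congr 1
        rw [hc, show -α - β*x = -α + -(β*x) by ring, Real.exp_add]
        field_simp
        ring
      rw [setLIntegral_congr_fun measurableSet_Ioi heq]
      rw [← ofReal_integral_eq_lintegral_ofReal ((integrableOn_real_aux hβ k).const_mul c) ?_]
      · rw [integral_const_mul, real_integral_aux hβ k]
      · filter_upwards [ae_restrict_mem measurableSet_Ioi] with x hx
        have hx' : (0:ℝ) < x := hx
        positivity
    rw [hcalc, tsum_congr hval,
      ← ENNReal.ofReal_tsum_of_nonneg (fun k => by positivity) (summable_coef hα hβ hβ)]
    exact ENNReal.ofReal_lt_top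

end BesselAux

end Main

open BesselAux in

theorem besselMeasure_charFun (α β : ℝ) (hα : 0 < α) (hβ : 0 < β)
    (u : ℂ) (hu : u.re ≤ 0) :
    ∫ x in Set.Ici (0 : ℝ), Complex.exp (u * x) ∂(besselMeasure α β) =
      Complex.exp ((α : ℂ) * u / ((β : ℂ) - u)) := by
  classical
  have hsre : 0 < ((β:ℂ) - u).re := by
    simp only [Complex.sub_re, Complex.ofReal_re]; linarith
  set s : ℂ := (β:ℂ) - u with hs_def
  have hs : 0 < s.re := hsre
  have hs0 : s ≠ 0 := by
    intro h; rw [h] at hs; simp at hs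
  have hf_norm : ∀ x : ℝ, 0 ≤ x → ‖Complex.exp (u * x)‖ ≤ 1 := by
    intro x hx
    rw [Complex.norm_exp]
    have : (u * (x:ℂ)).re = u.re * x := by simp [Complex.mul_re]
    rw [this]
    exact Real.exp_le_one_iff.mpr (mul_nonpos_of_nonpos_of_nonneg hu hx)
  set D := besselDensity α β with hD_def
  set ind : ℝ → ℝ := Set.indicator (Set.Ioi 0) D with hind_def
  have hind_meas : Measurable ind := (measurable_besselDensity α β).indicator measurableSet_Ioi
  -- decompose the measure
  have hres : (besselMeasure α β).restrict (Ici 0)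
      = ENNReal.ofReal (Real.exp (-α)) • Measure.dirac 0
        + (volume.restrict (Ici 0)).withDensity (fun x => ENNReal.ofReal (ind x)) := by
    rw [besselMeasure, Measure.restrict_add, Measure.restrict_smul,
      restrict_withDensity measurableSet_Ici]
    congr 1
    rw [MeasureTheory.restrict_dirac]
    simp
  rw [hres]
  have hg_meas : AEMeasurable (fun x => Real.toNNReal (ind x)) (volume.restrict (Ici 0)) :=
    (measurable_real_toNNReal.comp hind_meas).aemeasurable
  have hDf_int : IntegrableOn (fun x => (D x : ℂ) * Complex.exp (u * x)) (Ioi 0) := by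
    apply Integrable.mono' (integrableOn_besselDensity hα hβ)
    · exact ((Complex.measurable_ofReal.comp (measurable_besselDensity α β)).mul
        (by fun_prop : Measurable fun x : ℝ => Complex.exp (u * x))).aestronglyMeasurable.restrict
    · filter_upwards [ae_restrict_mem measurableSet_Ioi] with x hx
      rw [norm_mul]
      calc ‖(D x : ℂ)‖ * ‖Complex.exp (u * x)‖ ≤ ‖(D x : ℂ)‖ * 1 :=
            mul_le_mul_of_nonneg_left (hf_norm x (le_of_lt hx)) (norm_nonneg _)
        _ = D x := by
            rw [mul_one, Complex.norm_real, Real.norm_eq_abs,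
              abs_of_nonneg (besselDensity_nonneg hβ.le x)]
  have hsmul_eq : (fun x : ℝ => (Real.toNNReal (ind x) : ℝ≥0) • Complex.exp (u * x))
      = Set.indicator (Ioi 0) (fun x => (D x : ℂ) * Complex.exp (u * x)) := by
    funext x
    by_cases hx : x ∈ Ioi (0:ℝ)
    · rw [Set.indicator_of_mem hx, hind_def, Set.indicator_of_mem hx,
        NNReal.smul_def, Real.coe_toNNReal _ (besselDensity_nonneg hβ.le x), Complex.real_smul]
    · rw [Set.indicator_of_notMem hx, hind_def, Set.indicator_of_notMem hx]
      simp
  have hf_int2 : Integrable (fun x : ℝ => Complex.exp (u * x))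
      ((volume.restrict (Ici 0)).withDensity (fun x => ENNReal.ofReal (ind x))) := by
    rw [show (fun x => ENNReal.ofReal (ind x))
        = (fun x => ((Real.toNNReal (ind x) : ℝ≥0) : ℝ≥0∞)) from rfl,
      integrable_withDensity_iff_integrable_smul₀ hg_meas]
    rw [hsmul_eq]
    exact (hDf_int.integrable_indicator measurableSet_Ioi).restrict
  have hf_int1 : Integrable (fun x : ℝ => Complex.exp (u * x))
      (ENNReal.ofReal (Real.exp (-α)) • Measure.dirac (0:ℝ)) := by
    have hd : Integrable (fun x : ℝ => Complex.exp (u * x)) (Measure.dirac (0:ℝ)) := by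
      refine (integrable_const (Complex.exp (u * ((0:ℝ):ℂ)))).congr ?_
      exact (ae_eq_dirac (fun x : ℝ => Complex.exp (u * x))).symm
    exact hd.smul_measure ENNReal.ofReal_ne_top
  rw [integral_add_measure hf_int1 hf_int2]
  have hT1 : ∫ x : ℝ, Complex.exp (u * x) ∂(ENNReal.ofReal (Real.exp (-α)) • Measure.dirac (0:ℝ))
      = ((Real.exp (-α) : ℝ) : ℂ) := by
    rw [integral_smul_measure, integral_dirac]
    rw [ENNReal.toReal_ofReal (Real.exp_nonneg _)]
    simp
  have hT2 : ∫ x : ℝ, Complex.exp (u * x)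
        ∂((volume.restrict (Ici 0)).withDensity (fun x => ENNReal.ofReal (ind x)))
      = ∫ x in Ioi (0:ℝ), (D x : ℂ) * Complex.exp (u * x) := by
    rw [show (fun x => ENNReal.ofReal (ind x))
        = (fun x => ((Real.toNNReal (ind x) : ℝ≥0) : ℝ≥0∞)) from rfl,
      integral_withDensity_eq_integral_smul₀ hg_meas]
    rw [hsmul_eq, integral_indicator measurableSet_Ioi,
      Measure.restrict_restrict measurableSet_Ioi,
      Set.inter_eq_self_of_subset_left Set.Ioi_subset_Ici_self]
  rw [hT1, hT2]
  -- series computation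
  set Ck : ℕ → ℂ := fun k =>
    ((α*β*Real.exp (-α) * (α*β)^k / ((Nat.factorial k : ℝ) * (Nat.factorial (k+1) : ℝ)) : ℝ) : ℂ)
    with hCk
  have hexp1 : ((Real.exp (-α) : ℝ) : ℂ) = Complex.exp (-(α:ℂ)) := by
    rw [Complex.ofReal_exp]; norm_num
  have hpoint : ∀ x ∈ Ioi (0:ℝ), (D x : ℂ) * Complex.exp (u * x)
      = ∑' k : ℕ, Ck k * ((x:ℂ)^k * Complex.exp (-(s*x))) := by
    intro x hx
    rw [hD_def, besselDensity_eq hα hβ hx, Complex.ofReal_tsum, ← tsum_mul_right]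
    apply tsum_congr
    intro k
    have e1 : ((Real.exp (-α - β*x) : ℝ) : ℂ)
        = Complex.exp (-(α:ℂ)) * Complex.exp (-((β:ℂ)*x)) := by
      rw [Complex.ofReal_exp, ← Complex.exp_add]
      congr 1
      push_cast
      ring
    have e2 : Complex.exp (-(s*x)) = Complex.exp (u * x) * Complex.exp (-((β:ℂ)*x)) := by
      rw [← Complex.exp_add]
      congr 1
      rw [hs_def]
      ring
    rw [hCk]
    push_cast [e1, e2, hexp1]
    ring
  rw [setIntegral_congr_fun measurableSet_Ioi hpoint]
  have hInt : ∀ k : ℕ, Integrable (fun x : ℝ => Ck k * ((x:ℂ)^k * Complex.exp (-(s*x))))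
      (volume.restrict (Ioi 0)) := fun k => (integrableOn_aux hs k).const_mul _
  have hck_nonneg : ∀ k : ℕ,
      0 ≤ α*β*Real.exp (-α) * (α*β)^k / ((Nat.factorial k : ℝ) * (Nat.factorial (k+1) : ℝ)) := by
    intro k; positivity
  have hNormVal : ∀ k : ℕ, ∫ x in Ioi (0:ℝ), ‖Ck k * ((x:ℂ)^k * Complex.exp (-(s*x)))‖
      = (α*β*Real.exp (-α) * (α*β)^k / ((Nat.factorial k : ℝ) * (Nat.factorial (k+1) : ℝ)))
          * ((Nat.factorial k : ℝ) / (s.re)^(k+1)) := by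
    intro k
    have heq : ∀ x ∈ Ioi (0:ℝ), ‖Ck k * ((x:ℂ)^k * Complex.exp (-(s*x)))‖
        = (α*β*Real.exp (-α) * (α*β)^k / ((Nat.factorial k : ℝ) * (Nat.factorial (k+1) : ℝ)))
            * (x^k * Real.exp (-(s.re*x))) := by
      intro x hx
      rw [norm_mul, norm_aux s k (le_of_lt hx), hCk, Complex.norm_real, Real.norm_eq_abs,
        abs_of_nonneg (hck_nonneg k)]
    rw [setIntegral_congr_fun measurableSet_Ioi heq, integral_const_mul, real_integral_aux hs k]
  have hNorm : Summable fun k : ℕ => ∫ x in Ioi (0:ℝ), ‖Ck k * ((x:ℂ)^k * Complex.exp (-(s*x)))‖ := by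
    apply Summable.congr (summable_coef hα hβ hs) (fun k => (hNormVal k).symm)
  rw [← integral_tsum_of_summable_integral_norm hInt hNorm]
  have hIval : ∀ k : ℕ, ∫ x in Ioi (0:ℝ), Ck k * ((x:ℂ)^k * Complex.exp (-(s*x)))
      = ((Real.exp (-α) : ℝ) : ℂ) * (((α:ℂ)*(β:ℂ)/s)^(k+1) / ((Nat.factorial (k+1) : ℕ) : ℂ)) := by
    intro k
    rw [integral_const_mul, integral_aux hs k, hCk]
    have h1 : ((Nat.factorial k : ℕ) : ℂ) ≠ 0 := Nat.cast_ne_zero.mpr (Nat.factorial_ne_zero k)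
    have h2 : ((Nat.factorial (k+1) : ℕ) : ℂ) ≠ 0 := Nat.cast_ne_zero.mpr (Nat.factorial_ne_zero (k+1))
    have h3 : s^(k+1) ≠ 0 := pow_ne_zero _ hs0
    push_cast
    simp only [div_pow]
    field_simp
    ring
  rw [tsum_congr hIval, tsum_mul_left]
  have hsum : Summable fun n : ℕ => ((α:ℂ)*(β:ℂ)/s)^n / ((Nat.factorial n : ℕ) : ℂ) :=
    NormedSpace.expSeries_div_summable _
  have hexp2 : Complex.exp ((α:ℂ)*(β:ℂ)/s)
      = 1 + ∑' k : ℕ, ((α:ℂ)*(β:ℂ)/s)^(k+1) / ((Nat.factorial (k+1) : ℕ) : ℂ) := by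
    rw [Complex.exp_eq_exp_ℂ, NormedSpace.exp_eq_tsum_div]
    beta_reduce
    rw [hsum.tsum_eq_zero_add]
    simp
  calc ((Real.exp (-α) : ℝ) : ℂ)
        + ((Real.exp (-α) : ℝ) : ℂ) * ∑' k : ℕ, ((α:ℂ)*(β:ℂ)/s)^(k+1) / ((Nat.factorial (k+1) : ℕ) : ℂ)
      = Complex.exp (-(α:ℂ)) * (1 + ∑' k : ℕ, ((α:ℂ)*(β:ℂ)/s)^(k+1) / ((Nat.factorial (k+1) : ℕ) : ℂ)) := by
        rw [hexp1]; ring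
    _ = Complex.exp (-(α:ℂ)) * Complex.exp ((α:ℂ)*(β:ℂ)/s) := by rw [← hexp2]
    _ = Complex.exp (-(α:ℂ) + (α:ℂ)*(β:ℂ)/s) := (Complex.exp_add _ _).symm
    _ = Complex.exp ((α:ℂ) * u / s) := by
        congr 1
        field_simp
        linear_combination (α:ℂ) * hs_def
end

section
/- Let α, β, γ > 0. The mixture of Bessel distributions m_{α,β,γ} admits the representation m_{α,β,γ}(dx) = (1/(1+α))^γ δ_0(dx) + g_{α,β,γ}(x) dx on [0,∞), where g_{α,β,γ}(x) = ∑_{k=1}^∞ [α^k Γ(k+γ)/((α+1)^{k+γ} Γ(γ) k!)] · Γ(x; k, β) and Γ(x; k, β) = β^k x^{k−1} e^{−βx}/Γ(k) is the density of the Gamma distribution with shape k and rate β. -/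
open MeasureTheory Set

namespace BesselMixtureAux
open Filter Topology ProbabilityTheory
open scoped ENNReal
noncomputable section

def tk (α β : ℝ) (k : ℕ) (t x : ℝ) : ℝ :=
  β * (α * t) ^ (k + 1) * (β * x) ^ k * Real.exp (-(α * t) - β * x) /
    (Nat.factorial k * Nat.factorial (k + 1))
lemma tk_eq (α β : ℝ) (k : ℕ) (t x : ℝ) :
    tk α β k t x = (β * (α * t) * Real.exp (-(α * t) - β * x)) *
      ((α * t * (β * x)) ^ k / (Nat.factorial k * Nat.factorial (k + 1))) := by
  unfold tk; rw [pow_succ, mul_pow]; ring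

lemma tk_nonneg {α β t x : ℝ} (hat : 0 ≤ α * t) (hβ : 0 ≤ β) (hbx : 0 ≤ β * x) (k : ℕ) :
    0 ≤ tk α β k t x := by
  unfold tk
  have h1 : (0:ℝ) ≤ (α*t)^(k+1) := pow_nonneg hat _
  have h2 : (0:ℝ) ≤ (β*x)^k := pow_nonneg hbx _
  positivity

lemma summable_tk {α β t x : ℝ} (hat : 0 ≤ α * t) (hbx : 0 ≤ β * x) :
    Summable (fun k => tk α β k t x) := by
  have : Summable (fun k : ℕ => (α * t * (β * x)) ^ k /
      ((Nat.factorial k : ℝ) * Nat.factorial (k + 1))) := by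
    refine Summable.of_nonneg_of_le (fun k => by positivity) (fun k => ?_)
      (Real.summable_pow_div_factorial (α * t * (β * x)))
    have hy : (0:ℝ) ≤ α * t * (β * x) := mul_nonneg hat hbx
    apply div_le_div_of_nonneg_left ?_ ?_ ?_ |>.trans_eq rfl
    · exact pow_nonneg hy k
    · positivity
    · exact_mod_cast Nat.le_mul_of_pos_right _ (Nat.factorial_pos _)
  simpa [← tk_eq] using this.mul_left (β * (α * t) * Real.exp (-(α * t) - β * x))

lemma besselDensity_eq_tsum {α β t x : ℝ} (hα : 0 < α) (hβ : 0 < β) (ht : 0 < t) (hx : 0 < x) :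
    besselDensity (α * t) β x = ∑' k, tk α β k t x := by
  have hat : 0 < α * t := mul_pos hα ht
  have hbx : 0 < β * x := mul_pos hβ hx
  have hy : 0 ≤ α * t * β * x := by positivity
  have h1 : (2 * Real.sqrt (α * t * β * x)) / 2 = Real.sqrt (α * t * β * x) := by ring
  have h2 : (2 * Real.sqrt (α * t * β * x)) ^ 2 / 4 = α * t * β * x := by
    rw [mul_pow, Real.sq_sqrt hy]; ring
  have h3 : Real.sqrt (α * t / (β * x)) * Real.sqrt (α * t * β * x) = α * t := by
    rw [← Real.sqrt_mul (by positivity)]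
    rw [show α * t / (β * x) * (α * t * β * x) = (α * t) ^ 2 by field_simp]
    exact Real.sqrt_sq hat.le
  unfold besselDensity besselI1
  rw [h1, h2]
  set T : ℝ := ∑' k : ℕ, (α * t * β * x) ^ k / (Nat.factorial k * Nat.factorial (k + 1)) with hT
  have h4 : β * Real.exp (-(α * t) - β * x) * Real.sqrt (α * t / (β * x)) *
      (Real.sqrt (α * t * β * x) * T) = (β * (α * t) * Real.exp (-(α * t) - β * x)) * T := by
    linear_combination (β * Real.exp (-(α * t) - β * x) * T) * h3
  rw [h4, hT, ← tsum_mul_left]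
  exact tsum_congr fun k => by
    rw [tk_eq, show α * t * β * x = α * t * (β * x) by ring]

lemma besselDensity_eq_zero {a β x : ℝ} (ha : a ≤ 0) (hβ : 0 < β) (hx : 0 < x) :
    besselDensity a β x = 0 := by
  unfold besselDensity
  have : Real.sqrt (a / (β * x)) = 0 := Real.sqrt_eq_zero'.mpr (by
    exact div_nonpos_of_nonpos_of_nonneg ha (by positivity))
  rw [this]; ring

def G (α β : ℝ) : ℝ × ℝ → ℝ≥0∞ := fun p =>
  Set.indicator (Ioi 0 ×ˢ Ioi 0) (fun p => ∑' k, ENNReal.ofReal (tk α β k p.1 p.2)) p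

lemma measurable_G (α β : ℝ) : Measurable (G α β) := by
  apply Measurable.indicator _ (measurableSet_Ioi.prod measurableSet_Ioi)
  apply Measurable.ennreal_tsum
  intro k
  apply ENNReal.measurable_ofReal.comp
  have : Continuous fun p : ℝ × ℝ => tk α β k p.1 p.2 := by
    unfold tk; fun_prop
  exact this.measurable

lemma G_eq {α β : ℝ} (hα : 0 < α) (hβ : 0 < β) (t x : ℝ) :
    G α β (t, x) = ENNReal.ofReal (Set.indicator (Set.Ioi 0) (besselDensity (α * t) β) x) := by
  by_cases hx : 0 < x
  · by_cases ht : 0 < t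
    · rw [G, indicator_of_mem (show (t,x) ∈ Ioi (0:ℝ) ×ˢ Ioi (0:ℝ) from ⟨ht, hx⟩),
        indicator_of_mem (show x ∈ Ioi (0:ℝ) from hx),
        besselDensity_eq_tsum hα hβ ht hx,
        ENNReal.ofReal_tsum_of_nonneg
          (tk_nonneg (by positivity) hβ.le (by positivity))
          (summable_tk (by positivity) (by positivity))]
    · push_neg at ht
      rw [G, indicator_of_notMem (show (t,x) ∉ Ioi (0:ℝ) ×ˢ Ioi (0:ℝ) from fun h => ht.not_gt h.1),
        indicator_of_mem (show x ∈ Ioi (0:ℝ) from hx),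
        besselDensity_eq_zero (mul_nonpos_of_nonneg_of_nonpos hα.le ht) hβ hx,
        ENNReal.ofReal_zero]
  · rw [G, indicator_of_notMem (show (t,x) ∉ Ioi (0:ℝ) ×ˢ Ioi (0:ℝ) from fun h => hx h.2),
      indicator_of_notMem (show x ∉ Ioi (0:ℝ) from hx), ENNReal.ofReal_zero]

lemma measurable_kernel (α β : ℝ) (hα : 0 < α) (hβ : 0 < β) :
    Measurable (fun t => besselMeasure (α * t) β) := by
  apply Measure.measurable_of_measurable_coe
  intro s hs
  simp only [besselMeasure, Measure.coe_add, Pi.add_apply, Measure.smul_apply, smul_eq_mul,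
    withDensity_apply _ hs]
  apply Measurable.add
  · exact (ENNReal.measurable_ofReal.comp (by fun_prop)).mul_const _
  · simp_rw [← G_eq hα hβ]
    exact Measurable.lintegral_prod_right (measurable_G α β)

lemma lint_gamma {s r : ℝ} (hs : 0 < s) (hr : 0 < r) :
    ∫⁻ t in Ioi (0:ℝ), ENNReal.ofReal (t ^ (s - 1) * Real.exp (-(r * t)))
      = ENNReal.ofReal ((1 / r) ^ s * Real.Gamma s) := by
  have hint : IntegrableOn (fun t : ℝ => t ^ (s - 1) * Real.exp (-(r * t))) (Ioi 0) := by
    have := integrableOn_rpow_mul_exp_neg_mul_rpow (p := 1) (s := s - 1) (b := r)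
      (by linarith) one_pos hr
    simpa [Real.rpow_one, neg_mul] using this
  rw [← Real.integral_rpow_mul_exp_neg_mul_Ioi hs hr,
    ← ofReal_integral_eq_lintegral_ofReal hint]
  filter_upwards [self_mem_ae_restrict measurableSet_Ioi] with t ht
  have : (0:ℝ) < t := ht
  positivity

lemma measurable_gammaPDF' (a r : ℝ) : Measurable (gammaPDF a r) :=
  ENNReal.measurable_ofReal.comp (measurable_gammaPDFReal a r)

lemma lint_vanish_neg {f : ℝ → ℝ≥0∞} (h : ∀ t < (0:ℝ), f t = 0) :
    ∫⁻ t, f t = ∫⁻ t in Ioi (0:ℝ), f t := by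
  rw [← lintegral_add_compl f (measurableSet_Ici (a := (0:ℝ)))]
  have h1 : ∫⁻ t in (Ici (0:ℝ))ᶜ, f t = 0 := by
    rw [compl_Ici]
    rw [setLIntegral_congr_fun measurableSet_Iio
      (fun t (ht : t ∈ Iio (0:ℝ)) => h t ht)]
    simp
  rw [h1, add_zero, setLIntegral_congr (Ioi_ae_eq_Ici (μ := volume) (a := (0:ℝ))).symm]

lemma exp_combine {c t : ℝ} : Real.exp (-(1 * t)) * Real.exp (-(c * t)) = Real.exp (-((1 + c) * t)) := by
  rw [← Real.exp_add]; congr 1; ring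

lemma atom_coeff {α γ : ℝ} (hα : 0 < α) (hγ : 0 < γ) :
    ∫⁻ t, ENNReal.ofReal (Real.exp (-(α * t))) ∂(gammaMeasure γ 1)
      = ENNReal.ofReal ((1 / (1 + α)) ^ γ) := by
  rw [gammaMeasure, lintegral_withDensity_eq_lintegral_mul _ (measurable_gammaPDF' γ 1)
    (by fun_prop)]
  simp only [Pi.mul_apply]
  rw [lint_vanish_neg (fun t ht => by simp [gammaPDF_of_neg ht])]
  have hpt : ∀ t ∈ Ioi (0:ℝ), gammaPDF γ 1 t * ENNReal.ofReal (Real.exp (-(α * t)))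
      = ENNReal.ofReal (1 / Real.Gamma γ) *
        ENNReal.ofReal (t ^ (γ - 1) * Real.exp (-((1 + α) * t))) := by
    intro t ht
    have h0 : (0:ℝ) < t := ht
    have hg := Real.Gamma_pos_of_pos hγ
    have h1 : (0:ℝ) ≤ t ^ (γ - 1) := Real.rpow_nonneg h0.le _
    rw [gammaPDF_of_nonneg h0.le, ← ENNReal.ofReal_mul (by positivity),
      ← ENNReal.ofReal_mul (by positivity)]
    congr 1
    calc (1:ℝ) ^ γ / Real.Gamma γ * t ^ (γ - 1) * Real.exp (-(1 * t)) * Real.exp (-(α * t))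
        = 1 / Real.Gamma γ * (t ^ (γ - 1) * (Real.exp (-(1 * t)) * Real.exp (-(α * t)))) := by
          rw [Real.one_rpow]; ring
      _ = 1 / Real.Gamma γ * (t ^ (γ - 1) * Real.exp (-((1 + α) * t))) := by rw [exp_combine]
  rw [setLIntegral_congr_fun measurableSet_Ioi hpt,
    lintegral_const_mul' _ _ ENNReal.ofReal_ne_top,
    lint_gamma hγ (by linarith : (0:ℝ) < 1 + α), ← ENNReal.ofReal_mul (by positivity)]
  congr 1
  have hg := Real.Gamma_pos_of_pos hγ
  field_simp

def Dk (α β γ x : ℝ) (k : ℕ) : ℝ :=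
  β * α ^ (k + 1) * (β * x) ^ k * Real.exp (-(β * x)) /
      (Real.Gamma γ * (Nat.factorial k * Nat.factorial (k + 1))) *
    ((1 / (1 + α)) ^ ((k : ℝ) + 1 + γ) * Real.Gamma ((k : ℝ) + 1 + γ))

lemma key_lintegral {α β γ x : ℝ} (hα : 0 < α) (hβ : 0 < β) (hγ : 0 < γ) (hx : 0 < x) :
    ∫⁻ t, G α β (t, x) ∂(gammaMeasure γ 1) = ∑' k, ENNReal.ofReal (Dk α β γ x k) := by
  have hGm : Measurable fun t => G α β (t, x) :=
    (measurable_G α β).comp (measurable_id.prodMk measurable_const)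
  rw [gammaMeasure, lintegral_withDensity_eq_lintegral_mul _ (measurable_gammaPDF' γ 1) hGm]
  simp only [Pi.mul_apply]
  rw [lint_vanish_neg (fun t ht => by
    rw [G, indicator_of_notMem (show (t,x) ∉ Ioi (0:ℝ) ×ˢ Ioi (0:ℝ) from fun h => ht.not_gt h.1),
      mul_zero])]
  have hpt : ∀ t ∈ Ioi (0:ℝ), gammaPDF γ 1 t * G α β (t, x)
      = ∑' k, ENNReal.ofReal (tk α β k t x) * gammaPDF γ 1 t := by
    intro t ht
    rw [G, indicator_of_mem (show (t,x) ∈ Ioi (0:ℝ) ×ˢ Ioi (0:ℝ) from ⟨ht, hx⟩),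
      ← ENNReal.tsum_mul_left]
    exact tsum_congr fun k => mul_comm _ _
  rw [setLIntegral_congr_fun measurableSet_Ioi hpt]
  rw [lintegral_tsum (fun k => by
    apply Measurable.aemeasurable
    apply Measurable.mul _ (measurable_gammaPDF' γ 1)
    exact ENNReal.measurable_ofReal.comp
      (Continuous.measurable (by unfold tk; fun_prop)))]
  refine tsum_congr fun k => ?_
  have hs : (0:ℝ) < (k : ℝ) + 1 + γ := by positivity
  have hpt2 : ∀ t ∈ Ioi (0:ℝ), ENNReal.ofReal (tk α β k t x) * gammaPDF γ 1 t
      = ENNReal.ofReal (β * α ^ (k + 1) * (β * x) ^ k * Real.exp (-(β * x)) /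
          (Real.Gamma γ * (Nat.factorial k * Nat.factorial (k + 1)))) *
        ENNReal.ofReal (t ^ (((k : ℝ) + 1 + γ) - 1) * Real.exp (-((1 + α) * t))) := by
    intro t ht
    have h0 : (0:ℝ) < t := ht
    have hg := Real.Gamma_pos_of_pos hγ
    rw [gammaPDF_of_nonneg h0.le,
      ← ENNReal.ofReal_mul (tk_nonneg (by positivity) hβ.le (by positivity) k),
      ← ENNReal.ofReal_mul (by positivity)]
    congr 1
    have e1 : t ^ (((k+1 : ℕ)) : ℝ) * t ^ (γ - 1) = t ^ (((k : ℝ) + 1 + γ) - 1) := by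
      rw [← Real.rpow_add h0]; congr 1; push_cast; ring
    have e2 : Real.exp (-(1 * t)) * Real.exp (-(α * t) - β * x)
        = Real.exp (-(β * x)) * Real.exp (-((1 + α) * t)) := by
      rw [← Real.exp_add, ← Real.exp_add]; congr 1; ring
    calc tk α β k t x * ((1:ℝ) ^ γ / Real.Gamma γ * t ^ (γ - 1) * Real.exp (-(1 * t)))
        = (1 / Real.Gamma γ) * (β * α ^ (k+1) * (β * x) ^ k / (Nat.factorial k * Nat.factorial (k+1))) *
            ((t ^ (((k+1 : ℕ)) : ℝ) * t ^ (γ - 1)) * (Real.exp (-(1 * t)) * Real.exp (-(α * t) - β * x))) := by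
          rw [Real.one_rpow]; unfold tk
          rw [mul_pow, ← Real.rpow_natCast t (k+1)]
          push_cast
          ring
      _ = β * α ^ (k + 1) * (β * x) ^ k * Real.exp (-(β * x)) /
            (Real.Gamma γ * (Nat.factorial k * Nat.factorial (k + 1))) *
          (t ^ (((k : ℝ) + 1 + γ) - 1) * Real.exp (-((1 + α) * t))) := by
          rw [e1, e2]; ring
  rw [setLIntegral_congr_fun measurableSet_Ioi hpt2,
    lintegral_const_mul' _ _ ENNReal.ofReal_ne_top,
    lint_gamma hs (by linarith : (0:ℝ) < 1 + α),
    ← ENNReal.ofReal_mul (by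
      have hg := Real.Gamma_pos_of_pos hγ
      have h1 : (0:ℝ) ≤ (β*x)^k := by positivity
      positivity)]
  rfl

lemma Dk_pos {α β γ x : ℝ} (hα : 0 < α) (hβ : 0 < β) (hγ : 0 < γ) (hx : 0 < x) (k : ℕ) :
    0 < Dk α β γ x k := by
  unfold Dk
  have h1 : (0:ℝ) < (β*x)^k := by positivity
  have h2 := Real.Gamma_pos_of_pos hγ
  have h3 : (0:ℝ) < Real.Gamma ((k:ℝ) + 1 + γ) := Real.Gamma_pos_of_pos (by positivity)
  have h4 : (0:ℝ) < (1/(1+α)) ^ ((k:ℝ) + 1 + γ) := Real.rpow_pos_of_pos (by positivity) _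
  positivity

lemma Dk_succ {α β γ x : ℝ} (hα : 0 < α) (hγ : 0 < γ) (k : ℕ) :
    Dk α β γ x (k + 1) = α * (β * x) * ((k : ℝ) + 1 + γ) /
      ((1 + α) * ((k : ℝ) + 1) * ((k : ℝ) + 2)) * Dk α β γ x k := by
  unfold Dk
  have hb : (0:ℝ) < 1 / (1 + α) := by positivity
  rw [show (((k + 1 : ℕ)) : ℝ) + 1 + γ = ((k : ℝ) + 1 + γ) + 1 by push_cast; ring,
    Real.Gamma_add_one (by positivity : ((k:ℝ) + 1 + γ) ≠ 0),
    Real.rpow_add hb, Real.rpow_one]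
  have hf1 : ((k:ℝ) + 1) ≠ 0 := by positivity
  have hf2 : ((k:ℝ) + 2) ≠ 0 := by positivity
  have hg := (Real.Gamma_pos_of_pos hγ).ne'
  have hfac1 : ((Nat.factorial k : ℝ)) ≠ 0 := by positivity
  have hfac2 : ((Nat.factorial (k+1) : ℝ)) ≠ 0 := by positivity
  have hfac3 : ((Nat.factorial (k+2) : ℝ)) ≠ 0 := by positivity
  have ha : (1:ℝ) + α ≠ 0 := by positivity
  push_cast [Nat.factorial_succ]
  field_simp
  ring

lemma summable_Dk {α β γ x : ℝ} (hα : 0 < α) (hβ : 0 < β) (hγ : 0 < γ) (hx : 0 < x) :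
    Summable (Dk α β γ x) := by
  apply summable_of_ratio_test_tendsto_lt_one zero_lt_one
    (Filter.Eventually.of_forall fun k => (Dk_pos hα hβ hγ hx k).ne')
  have hq : ∀ k : ℕ, ‖Dk α β γ x (k+1)‖ / ‖Dk α β γ x k‖
      = α * (β * x) * ((k : ℝ) + 1 + γ) / ((1 + α) * ((k : ℝ) + 1) * ((k : ℝ) + 2)) := by
    intro k
    rw [Real.norm_eq_abs, Real.norm_eq_abs, abs_of_pos (Dk_pos hα hβ hγ hx _),
      abs_of_pos (Dk_pos hα hβ hγ hx _), Dk_succ hα hγ, mul_div_assoc,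
      div_self (Dk_pos hα hβ hγ hx k).ne', mul_one]
  simp_rw [hq]
  set C : ℝ := α * (β * x) * (1 + γ) / (1 + α) with hC
  have hCpos : 0 < C := by positivity
  apply squeeze_zero (fun k => by positivity) (g := fun k : ℕ => C / ((k : ℝ) + 1))
  · intro k
    rw [hC, div_div, div_le_div_iff₀ (by positivity) (by positivity)]
    have h2 : (0:ℝ) ≤ (k:ℝ) := Nat.cast_nonneg k
    have h1 : (k:ℝ) + 1 + γ ≤ (1 + γ) * ((k:ℝ) + 2) := by nlinarith
    nlinarith [mul_le_mul_of_nonneg_left h1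
      (by positivity : (0:ℝ) ≤ α * (β * x) * ((1 + α) * ((k:ℝ) + 1)))]
  · apply Tendsto.div_atTop tendsto_const_nhds
    exact tendsto_atTop_add_const_right _ _ tendsto_natCast_atTop_atTop

lemma gMix_eq_tsum_Dk {α β γ x : ℝ} (hα : 0 < α) (hβ : 0 < β) (hγ : 0 < γ) (hx : 0 < x) :
    gMix α β γ x = ∑' k, Dk α β γ x k := by
  refine tsum_congr fun k => ?_
  rw [gammaDens, Dk]
  rw [show (((k + 1 : ℕ)) : ℝ) - 1 = ((k : ℕ) : ℝ) by push_cast; ring,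
    Real.rpow_natCast β (k+1), Real.rpow_natCast x k,
    show (((k + 1 : ℕ)) : ℝ) = (k : ℝ) + 1 by push_cast; ring,
    Real.Gamma_nat_eq_factorial k,
    show (1:ℝ) + α = α + 1 from add_comm 1 α,
    one_div, Real.inv_rpow (by positivity : (0:ℝ) ≤ α + 1)]
  have h1 : (0:ℝ) < (α+1) ^ ((k:ℝ) + 1 + γ) := Real.rpow_pos_of_pos (by positivity) _
  have hg := (Real.Gamma_pos_of_pos hγ).ne'
  have hfac1 : ((Nat.factorial k : ℝ)) ≠ 0 := by positivity
  have hfac2 : ((Nat.factorial (k+1) : ℝ)) ≠ 0 := by positivity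
  field_simp
  ring

lemma mixture_decomp {α β γ : ℝ} (hα : 0 < α) (hβ : 0 < β) (hγ : 0 < γ) :
    besselMixture α β γ
      = (∫⁻ t, ENNReal.ofReal (Real.exp (-(α * t))) ∂(gammaMeasure γ 1)) • Measure.dirac 0
        + volume.withDensity (fun x => ∫⁻ t, G α β (t, x) ∂(gammaMeasure γ 1)) := by
  haveI := isProbabilityMeasure_gammaMeasure hγ one_pos
  ext s hs
  rw [besselMixture, Measure.bind_apply hs (measurable_kernel α β hα hβ).aemeasurable]
  have hterm : ∀ t : ℝ, besselMeasure (α * t) β s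
      = ENNReal.ofReal (Real.exp (-(α * t))) * Measure.dirac 0 s
        + ∫⁻ x in s, G α β (t, x) := by
    intro t
    simp only [besselMeasure, Measure.coe_add, Pi.add_apply, Measure.smul_apply, smul_eq_mul,
      withDensity_apply _ hs]
    congr 1
    exact setLIntegral_congr_fun hs (fun x _ => (G_eq hα hβ t x).symm)
  rw [lintegral_congr hterm,
    lintegral_add_left (by fun_prop : Measurable fun t => ENNReal.ofReal
      (Real.exp (-(α * t))) * Measure.dirac 0 s),
    lintegral_mul_const _ (by fun_prop)]
  have hswap : ∫⁻ t, (∫⁻ x in s, G α β (t, x)) ∂(gammaMeasure γ 1)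
      = ∫⁻ x in s, (∫⁻ t, G α β (t, x) ∂(gammaMeasure γ 1)) := by
    exact lintegral_lintegral_swap (f := fun t x => G α β (t, x))
      ((measurable_G α β).aemeasurable)
  rw [hswap]
  simp only [Measure.coe_add, Pi.add_apply, Measure.smul_apply, smul_eq_mul,
    withDensity_apply _ hs]

end
end BesselMixtureAux

open BesselMixtureAux Filter Topology ProbabilityTheory in
theorem besselMixture_repr (α β γ : ℝ) (hα : 0 < α) (hβ : 0 < β) (hγ : 0 < γ) :
    (besselMixture α β γ).restrict (Set.Ici 0) =
      (ENNReal.ofReal ((1 / (1 + α)) ^ γ) • Measure.dirac 0 +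
        volume.withDensity fun x =>
          ENNReal.ofReal (Set.indicator (Set.Ici 0) (gMix α β γ) x)).restrict (Set.Ici 0) := by
  have hdens : (volume.withDensity (fun x => ∫⁻ t, G α β (t, x) ∂(gammaMeasure γ 1)))
      = volume.withDensity fun x => ENNReal.ofReal (Set.indicator (Set.Ici 0) (gMix α β γ) x) := by
    apply withDensity_congr_ae
    have h0 : ∀ᵐ (x : ℝ) ∂volume, x ≠ 0 := by
      rw [ae_iff]
      have : {a : ℝ | ¬a ≠ 0} = {0} := by ext a; simp
      rw [this]
      exact Real.volume_singleton
    filter_upwards [h0] with x hx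
    rcases lt_or_gt_of_ne hx with hx' | hx'
    · rw [indicator_of_notMem (show x ∉ Ici (0:ℝ) from fun h => absurd h (not_le.mpr hx')),
        ENNReal.ofReal_zero]
      have : ∀ t : ℝ, G α β (t, x) = 0 := fun t => by
        rw [G, indicator_of_notMem (show (t,x) ∉ Ioi (0:ℝ) ×ˢ Ioi (0:ℝ) from
          fun h => absurd h.2 (not_lt.mpr hx'.le))]
      simp [this]
    · rw [key_lintegral hα hβ hγ hx',
        indicator_of_mem (show x ∈ Ici (0:ℝ) from hx'.le),
        gMix_eq_tsum_Dk hα hβ hγ hx',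
        ENNReal.ofReal_tsum_of_nonneg (fun k => (Dk_pos hα hβ hγ hx' k).le)
          (summable_Dk hα hβ hγ hx')]
  rw [mixture_decomp hα hβ hγ, atom_coeff hα hγ, hdens]
end

section
/- The function (α, β, γ, x) ↦ g_{α,β,γ}(x) is continuous on the domain D = (0,∞) × (0,∞) × (0,∞) × [0,∞). -/
open MeasureTheory Set

private lemma aux_choose_pow (k N : ℕ) : (k + N).choose N ≤ 2 ^ (k + N) := by
  calc (k + N).choose N ≤ ∑ m ∈ Finset.range (k + N + 1), (k + N).choose m :=
        Finset.single_le_sum (fun i _ => Nat.zero_le _) (Finset.mem_range.mpr (by omega))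
    _ = 2 ^ (k + N) := Nat.sum_range_choose _

private lemma aux_factorial_add_le (k N : ℕ) :
    ((k + N).factorial : ℝ) ≤ (N.factorial : ℝ) * 2 ^ (k + N) * ((k + 1).factorial : ℝ) := by
  have h1 : (k + N).choose N * k.factorial * N.factorial = (k + N).factorial :=
    Nat.add_choose_mul_factorial_mul_factorial k N
  have h : (k + N).factorial ≤ N.factorial * 2 ^ (k + N) * (k + 1).factorial := by
    calc (k + N).factorial = (k + N).choose N * k.factorial * N.factorial := h1.symm
      _ ≤ 2 ^ (k + N) * (k + 1).factorial * N.factorial :=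
          Nat.mul_le_mul (Nat.mul_le_mul (aux_choose_pow k N) (Nat.factorial_le (by omega))) le_rfl
      _ = N.factorial * 2 ^ (k + N) * (k + 1).factorial := by ring
  exact_mod_cast h

private lemma aux_gamma_le_factorial (k N : ℕ) {c : ℝ} (h0 : 0 ≤ c) (hN : c ≤ N) :
    Real.Gamma (((k + 1 : ℕ) : ℝ) + c) ≤ ((k + N).factorial : ℝ) := by
  have hk1 : (0:ℝ) < ((k + 1 : ℕ) : ℝ) := by positivity
  have hseg : ((k + 1 : ℕ) : ℝ) + c ∈ segment ℝ (((k + 1 : ℕ) : ℝ)) (((k + 1 : ℕ) : ℝ) + N) := by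
    rw [segment_eq_Icc (by linarith : ((k + 1 : ℕ) : ℝ) ≤ ((k + 1 : ℕ) : ℝ) + N)]
    exact ⟨by linarith, by linarith⟩
  have h2 : ((k + 1 : ℕ) : ℝ) + N ∈ Set.Ioi (0:ℝ) := by
    have : (0:ℝ) ≤ (N : ℝ) := Nat.cast_nonneg N
    exact Set.mem_Ioi.mpr (by linarith)
  have hle := Real.convexOn_Gamma.le_on_segment (Set.mem_Ioi.mpr hk1) h2 hseg
  have e1 : Real.Gamma (((k + 1 : ℕ) : ℝ)) = (k.factorial : ℝ) := by
    rw [show ((k + 1 : ℕ) : ℝ) = (k : ℝ) + 1 by push_cast; ring, Real.Gamma_nat_eq_factorial]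
  have e2 : Real.Gamma (((k + 1 : ℕ) : ℝ) + N) = ((k + N).factorial : ℝ) := by
    rw [show ((k + 1 : ℕ) : ℝ) + N = ((k + N : ℕ) : ℝ) + 1 by push_cast; ring,
      Real.Gamma_nat_eq_factorial]
  rw [e1, e2] at hle
  exact hle.trans (max_le (Nat.cast_le.mpr (Nat.factorial_le (by omega))) le_rfl)

theorem gMix_continuousOn :
    ContinuousOn (fun p : ℝ × ℝ × ℝ × ℝ => gMix p.1 p.2.1 p.2.2.1 p.2.2.2)
      (Set.Ioi 0 ×ˢ Set.Ioi 0 ×ˢ Set.Ioi 0 ×ˢ Set.Ici 0) := by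
  rintro ⟨α, β, γ, x⟩ ⟨hα, hβ, hγ, hx⟩
  simp only [Set.mem_Ioi, Set.mem_Ici] at hα hβ hγ hx
  set S : Set (ℝ × ℝ × ℝ × ℝ) :=
    Icc (α/2) (α+1) ×ˢ Icc (β/2) (β+1) ×ˢ Icc (γ/2) (γ+1) ×ˢ Icc 0 (x+1) with hSdef
  have hmem : S ∈ nhdsWithin (α, β, γ, x)
      (Set.Ioi 0 ×ˢ Set.Ioi 0 ×ˢ Set.Ioi 0 ×ˢ Set.Ici (0:ℝ)) := by
    rw [mem_nhdsWithin]
    refine ⟨Ioo (α/2) (α+1) ×ˢ Ioo (β/2) (β+1) ×ˢ Ioo (γ/2) (γ+1) ×ˢ Iio (x+1), ?_, ?_, ?_⟩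
    · exact isOpen_Ioo.prod (isOpen_Ioo.prod (isOpen_Ioo.prod isOpen_Iio))
    · exact ⟨⟨by linarith, by linarith⟩, ⟨by linarith, by linarith⟩,
        ⟨by linarith, by linarith⟩, show x < x + 1 by linarith⟩
    · rintro ⟨a, b, c, y⟩ ⟨⟨⟨ha1, ha2⟩, ⟨hb1, hb2⟩, ⟨hc1, hc2⟩, hy⟩, ⟨-, -, -, hy0⟩⟩
      exact ⟨⟨ha1.le, ha2.le⟩, ⟨hb1.le, hb2.le⟩, ⟨hc1.le, hc2.le⟩, hy0, hy.le⟩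
  refine ContinuousWithinAt.mono_of_mem_nhdsWithin
    (ContinuousOn.continuousWithinAt ?_ (show (α, β, γ, x) ∈ S from
      ⟨⟨by linarith, by linarith⟩, ⟨by linarith, by linarith⟩,
      ⟨by linarith, by linarith⟩, by linarith, by linarith⟩)) hmem
  -- uniform lower bound for Γ on the γ-range
  obtain ⟨G, hG0, hGle⟩ : ∃ G, 0 < G ∧ ∀ t ∈ Icc (γ/2) (γ+1), G ≤ Real.Gamma t := by
    obtain ⟨t₀, ht₀, hmin⟩ := isCompact_Icc.exists_isMinOn (s := Icc (γ/2) (γ+1))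
      ⟨γ, by constructor <;> linarith⟩
      (fun t ht => (Real.differentiableAt_Gamma
        (fun m => (lt_of_le_of_lt (neg_nonpos.mpr (Nat.cast_nonneg m))
          (lt_of_lt_of_le (by linarith) ht.1)).ne')).continuousAt.continuousWithinAt)
    exact ⟨Real.Gamma t₀, Real.Gamma_pos_of_pos (lt_of_lt_of_le (by linarith) ht₀.1),
      fun t ht => isMinOn_iff.mp hmin t ht⟩
  set N : ℕ := ⌈γ⌉₊ + 1 with hNdef
  have hγN : γ + 1 ≤ (N : ℝ) := by
    have := Nat.le_ceil γ
    rw [hNdef]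
    push_cast
    linarith
  set C : ℝ := (β+1) * (N.factorial : ℝ) * 2 ^ N / G with hCdef
  refine (continuousOn_tsum
    (f := fun (k : ℕ) (p : ℝ × ℝ × ℝ × ℝ) =>
      p.1 ^ (k + 1) * Real.Gamma ((k + 1 : ℕ) + p.2.2.1) /
        ((p.1 + 1) ^ ((k + 1 : ℕ) + p.2.2.1) * Real.Gamma p.2.2.1 * Nat.factorial (k + 1)) *
      gammaDens (k + 1 : ℕ) p.2.1 p.2.2.2)
    (u := fun k => C * ((2*(β+1)*(x+1)) ^ k / (k.factorial : ℝ)))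
    ?_ ((Real.summable_pow_div_factorial _).mul_left C) ?_).congr
    (fun p _ => rfl)
  · -- continuity of each term
    intro k p hp
    obtain ⟨hpa, hpb, hpc, hpx⟩ := hp
    have ha0 : 0 < p.1 := lt_of_lt_of_le (by linarith) hpa.1
    have hb0 : 0 < p.2.1 := lt_of_lt_of_le (by linarith) hpb.1
    have hc0 : 0 < p.2.2.1 := lt_of_lt_of_le (by linarith) hpc.1
    apply ContinuousAt.continuousWithinAt
    have hK : (0:ℝ) < ((k + 1 : ℕ) : ℝ) := by positivity
    have hGkc : ContinuousAt (fun q : ℝ × ℝ × ℝ × ℝ =>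
        Real.Gamma (((k + 1 : ℕ) : ℝ) + q.2.2.1)) p := by
      have harg : (0:ℝ) < ((k + 1 : ℕ) : ℝ) + p.2.2.1 := by linarith
      have hinner : ContinuousAt (fun q : ℝ × ℝ × ℝ × ℝ => ((k + 1 : ℕ) : ℝ) + q.2.2.1) p := by
        fun_prop
      have houter : ContinuousAt Real.Gamma (((k + 1 : ℕ) : ℝ) + p.2.2.1) :=
        (Real.differentiableAt_Gamma
          (fun m => (lt_of_le_of_lt (neg_nonpos.mpr (Nat.cast_nonneg m)) harg).ne')).continuousAt
      exact houter.comp (f := fun q : ℝ × ℝ × ℝ × ℝ => ((k + 1 : ℕ) : ℝ) + q.2.2.1) hinner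
    have h1 : ContinuousAt (fun q : ℝ × ℝ × ℝ × ℝ =>
        q.1 ^ (k + 1) * Real.Gamma (((k + 1 : ℕ) : ℝ) + q.2.2.1)) p :=
      (continuousAt_fst.pow _).mul hGkc
    have hrp : ContinuousAt (fun q : ℝ × ℝ × ℝ × ℝ =>
        (q.1 + 1) ^ (((k + 1 : ℕ) : ℝ) + q.2.2.1)) p :=
      ContinuousAt.rpow (by fun_prop) (by fun_prop)
        (Or.inl (show p.1 + 1 ≠ 0 from (show (0:ℝ) < p.1 + 1 by linarith).ne'))
    have hGcat : ContinuousAt (fun q : ℝ × ℝ × ℝ × ℝ => Real.Gamma q.2.2.1) p := by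
      have hinner : ContinuousAt (fun q : ℝ × ℝ × ℝ × ℝ => q.2.2.1) p := by fun_prop
      have houter : ContinuousAt Real.Gamma p.2.2.1 :=
        (Real.differentiableAt_Gamma
          (fun m => (lt_of_le_of_lt (neg_nonpos.mpr (Nat.cast_nonneg m)) hc0).ne')).continuousAt
      exact houter.comp (f := fun q : ℝ × ℝ × ℝ × ℝ => q.2.2.1) hinner
    have hden : ContinuousAt (fun q : ℝ × ℝ × ℝ × ℝ =>
        (q.1 + 1) ^ (((k + 1 : ℕ) : ℝ) + q.2.2.1) * Real.Gamma q.2.2.1 *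
          ((Nat.factorial (k + 1) : ℝ))) p :=
      (hrp.mul hGcat).mul continuousAt_const
    have hdenne : (p.1 + 1) ^ (((k + 1 : ℕ) : ℝ) + p.2.2.1) * Real.Gamma p.2.2.1 *
        ((Nat.factorial (k + 1) : ℝ)) ≠ 0 := by
      apply ne_of_gt
      apply mul_pos (mul_pos (Real.rpow_pos_of_pos (by linarith) _)
        (Real.Gamma_pos_of_pos hc0))
      positivity
    have hgd : ContinuousAt (fun q : ℝ × ℝ × ℝ × ℝ =>
        gammaDens ((k + 1 : ℕ) : ℝ) q.2.1 q.2.2.2) p := by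
      simp only [gammaDens]
      have hb : ContinuousAt (fun q : ℝ × ℝ × ℝ × ℝ => q.2.1 ^ (((k + 1 : ℕ) : ℝ))) p :=
        ContinuousAt.rpow_const (by fun_prop) (Or.inr (by positivity))
      have hx1 : ContinuousAt (fun q : ℝ × ℝ × ℝ × ℝ =>
          q.2.2.2 ^ ((((k + 1 : ℕ) : ℝ)) - 1)) p := by
        refine ContinuousAt.rpow_const (by fun_prop) (Or.inr ?_)
        have : (0:ℝ) ≤ (k : ℝ) := Nat.cast_nonneg k
        push_cast
        linarith
      have hexp : ContinuousAt (fun q : ℝ × ℝ × ℝ × ℝ =>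
          Real.exp (-q.2.1 * q.2.2.2)) p := by fun_prop
      exact ((hb.mul hx1).mul hexp).div_const _
    exact (h1.div hden hdenne).mul hgd
  · -- the uniform bound
    intro k p hp
    obtain ⟨⟨ha1, ha2⟩, ⟨hb1, hb2⟩, ⟨hc1, hc2⟩, hy1, hy2⟩ := hp
    have ha0 : 0 < p.1 := by linarith
    have hb0 : 0 < p.2.1 := by linarith
    have hc0 : 0 < p.2.2.1 := by linarith
    have hy0 : (0:ℝ) ≤ p.2.2.2 := hy1
    have hKc : ((k + 1 : ℕ) : ℝ) = (k : ℝ) + 1 := by push_cast; ring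
    have hGK : (0:ℝ) < Real.Gamma (((k + 1 : ℕ) : ℝ) + p.2.2.1) :=
      Real.Gamma_pos_of_pos (by
        have hkk : (0:ℝ) < ((k+1:ℕ):ℝ) := by positivity
        linarith)
    have hΓK : Real.Gamma (((k + 1 : ℕ) : ℝ)) = (k.factorial : ℝ) := by
      rw [hKc, Real.Gamma_nat_eq_factorial]
    have hrpos : (0:ℝ) < (p.1 + 1) ^ (((k + 1 : ℕ) : ℝ) + p.2.2.1) :=
      Real.rpow_pos_of_pos (by linarith) _
    have eb : p.2.1 ^ (((k + 1 : ℕ) : ℝ)) = p.2.1 ^ (k + 1) := Real.rpow_natCast _ _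
    have ey : p.2.2.2 ^ ((((k + 1 : ℕ) : ℝ)) - 1) = p.2.2.2 ^ k := by
      rw [hKc, show (k : ℝ) + 1 - 1 = ((k : ℕ) : ℝ) by ring, Real.rpow_natCast]
    simp only [gammaDens, hΓK, eb, ey]
    have hgd0 : 0 ≤ p.2.1 ^ (k + 1) * p.2.2.2 ^ k * Real.exp (-p.2.1 * p.2.2.2) /
        (k.factorial : ℝ) := by positivity
    have hfrac0 : 0 ≤ p.1 ^ (k + 1) * Real.Gamma (((k + 1 : ℕ) : ℝ) + p.2.2.1) /
        ((p.1 + 1) ^ (((k + 1 : ℕ) : ℝ) + p.2.2.1) * Real.Gamma p.2.2.1 *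
          ((Nat.factorial (k + 1) : ℝ))) := by
      apply div_nonneg (mul_nonneg (by positivity) hGK.le)
      exact le_of_lt (mul_pos (mul_pos hrpos (Real.Gamma_pos_of_pos hc0)) (by positivity))
    rw [Real.norm_eq_abs, abs_of_nonneg (mul_nonneg hfrac0 hgd0)]
    have hfrac_le : p.1 ^ (k + 1) * Real.Gamma (((k + 1 : ℕ) : ℝ) + p.2.2.1) /
        ((p.1 + 1) ^ (((k + 1 : ℕ) : ℝ) + p.2.2.1) * Real.Gamma p.2.2.1 *
          ((Nat.factorial (k + 1) : ℝ))) ≤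
        ((k + N).factorial : ℝ) / (G * ((k + 1).factorial : ℝ)) := by
      have hpow : p.1 ^ (k + 1) ≤ (p.1 + 1) ^ (((k + 1 : ℕ) : ℝ) + p.2.2.1) := by
        calc p.1 ^ (k + 1) ≤ (p.1 + 1) ^ (k + 1) :=
              pow_le_pow_left₀ ha0.le (by linarith) _
          _ = (p.1 + 1) ^ (((k + 1 : ℕ) : ℝ)) := (Real.rpow_natCast _ _).symm
          _ ≤ (p.1 + 1) ^ (((k + 1 : ℕ) : ℝ) + p.2.2.1) :=
              Real.rpow_le_rpow_of_exponent_le (by linarith) (by linarith)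
      have hgam : Real.Gamma (((k + 1 : ℕ) : ℝ) + p.2.2.1) ≤ ((k + N).factorial : ℝ) :=
        aux_gamma_le_factorial k N hc0.le (by linarith)
      have hnum : p.1 ^ (k + 1) * Real.Gamma (((k + 1 : ℕ) : ℝ) + p.2.2.1) ≤
          (p.1 + 1) ^ (((k + 1 : ℕ) : ℝ) + p.2.2.1) * ((k + N).factorial : ℝ) :=
        mul_le_mul hpow hgam hGK.le hrpos.le
      have hGle' : G ≤ Real.Gamma p.2.2.1 := hGle _ ⟨hc1, hc2⟩
      have hdle : (p.1 + 1) ^ (((k + 1 : ℕ) : ℝ) + p.2.2.1) * (G * ((k + 1).factorial : ℝ)) ≤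
          (p.1 + 1) ^ (((k + 1 : ℕ) : ℝ) + p.2.2.1) * Real.Gamma p.2.2.1 *
            ((Nat.factorial (k + 1) : ℝ)) := by
        rw [mul_assoc]
        apply mul_le_mul_of_nonneg_left _ hrpos.le
        exact mul_le_mul_of_nonneg_right hGle' (by positivity)
      calc p.1 ^ (k + 1) * Real.Gamma (((k + 1 : ℕ) : ℝ) + p.2.2.1) /
            ((p.1 + 1) ^ (((k + 1 : ℕ) : ℝ) + p.2.2.1) * Real.Gamma p.2.2.1 *
              ((Nat.factorial (k + 1) : ℝ))) ≤
          ((p.1 + 1) ^ (((k + 1 : ℕ) : ℝ) + p.2.2.1) * ((k + N).factorial : ℝ)) /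
            ((p.1 + 1) ^ (((k + 1 : ℕ) : ℝ) + p.2.2.1) * (G * ((k + 1).factorial : ℝ))) :=
            div_le_div₀ (by positivity) hnum (by positivity) hdle
        _ = ((k + N).factorial : ℝ) / (G * ((k + 1).factorial : ℝ)) :=
            mul_div_mul_left _ _ hrpos.ne'
    have hnum_le : p.2.1 ^ (k + 1) * p.2.2.2 ^ k * Real.exp (-p.2.1 * p.2.2.2) ≤
        (β+1) ^ (k + 1) * (x+1) ^ k := by
      have h3 : Real.exp (-p.2.1 * p.2.2.2) ≤ 1 := Real.exp_le_one_iff.mpr (by nlinarith)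
      calc p.2.1 ^ (k + 1) * p.2.2.2 ^ k * Real.exp (-p.2.1 * p.2.2.2)
          ≤ p.2.1 ^ (k + 1) * p.2.2.2 ^ k * 1 :=
            mul_le_mul_of_nonneg_left h3 (by positivity)
        _ = p.2.1 ^ (k + 1) * p.2.2.2 ^ k := mul_one _
        _ ≤ (β+1) ^ (k + 1) * (x+1) ^ k :=
            mul_le_mul (pow_le_pow_left₀ hb0.le hb2 _) (pow_le_pow_left₀ hy0 hy2 _)
              (by positivity) (by positivity)
    have hgd_le : p.2.1 ^ (k + 1) * p.2.2.2 ^ k * Real.exp (-p.2.1 * p.2.2.2) /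
        (k.factorial : ℝ) ≤ (β+1) ^ (k + 1) * (x+1) ^ k / (k.factorial : ℝ) :=
      (div_le_div_iff_of_pos_right (by positivity)).mpr hnum_le
    have hGne : G ≠ 0 := hG0.ne'
    have hk1ne : ((k + 1).factorial : ℝ) ≠ 0 := Nat.cast_ne_zero.mpr (Nat.factorial_ne_zero _)
    have hkne : (k.factorial : ℝ) ≠ 0 := Nat.cast_ne_zero.mpr (Nat.factorial_ne_zero _)
    calc p.1 ^ (k + 1) * Real.Gamma (((k + 1 : ℕ) : ℝ) + p.2.2.1) /
          ((p.1 + 1) ^ (((k + 1 : ℕ) : ℝ) + p.2.2.1) * Real.Gamma p.2.2.1 *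
            ((Nat.factorial (k + 1) : ℝ))) *
          (p.2.1 ^ (k + 1) * p.2.2.2 ^ k * Real.exp (-p.2.1 * p.2.2.2) / (k.factorial : ℝ))
        ≤ ((k + N).factorial : ℝ) / (G * ((k + 1).factorial : ℝ)) *
            ((β+1) ^ (k + 1) * (x+1) ^ k / (k.factorial : ℝ)) :=
          mul_le_mul hfrac_le hgd_le hgd0
            (div_nonneg (Nat.cast_nonneg _) (le_of_lt (mul_pos hG0 (by positivity))))
      _ ≤ ((N.factorial : ℝ) * 2 ^ (k + N) * ((k + 1).factorial : ℝ)) /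
            (G * ((k + 1).factorial : ℝ)) * ((β+1) ^ (k + 1) * (x+1) ^ k / (k.factorial : ℝ)) := by
          apply mul_le_mul_of_nonneg_right _ (by positivity)
          exact (div_le_div_iff_of_pos_right (mul_pos hG0 (by positivity))).mpr (aux_factorial_add_le k N)
      _ = C * ((2*(β+1)*(x+1)) ^ k / (k.factorial : ℝ)) := by
          rw [hCdef, mul_pow, mul_pow, pow_add]
          field_simp
          ring
end

section
/- Fix constants a, θ, σ, c, d > 0 and set Δ = a − σ²d/2. Define ψ(t,u) = u e^{−at}/(1 − (σ²/(2a)) u (1−e^{−at})) and, if Δ ≠ 0, φ(t,u) = −(2aθ/σ²) log(1 − (σ²/(2a)) u (1−e^{−at})) + (c/Δ) log( (d − σ²du/(2a) + (σ²d/(2a) − 1) u e^{−at})/(d − u) ), while if Δ = 0, φ(t,u) = −(2aθ/σ²) log(1 − (σ²/(2a)) u (1−e^{−at})) + c u (1−e^{−at})/(a(d−u)). Then for every u ∈ ℂ with Re u ≤ 0 and every t ≥ 0: ψ(0,u) = u, φ(0,u) = 0, ∂_t ψ(t,u) = (σ²/2) ψ(t,u)² − a ψ(t,u), and ∂_t φ(t,u)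 = aθ ψ(t,u) + c ψ(t,u)/(d − ψ(t,u)); that is, ψ and φ solve the generalized Riccati equations ∂_t ψ = R(ψ), ψ(0,u) = u and ∂_t φ = F(ψ(t,u)), φ(0,u) = 0 with R(u) = σ²u²/2 − au and F(u) = aθu + cu/(d−u). -/
set_option maxHeartbeats 1000000


open MeasureTheory Set

/-- The function `ψ(t,u)` solving the second generalized Riccati equation. -/
noncomputable def riccatiPsi (a σ : ℝ) (t : ℝ) (u : ℂ) : ℂ :=
  u * Complex.exp (-(a : ℂ) * t) /
    (1 - ((σ ^ 2 / (2 * a) : ℝ) : ℂ) * u * (1 - Complex.exp (-(a : ℂ) * t)))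

/-- The function `φ(t,u)` solving the first generalized Riccati equation. -/
noncomputable def riccatiPhi (a θ σ c d : ℝ) (t : ℝ) (u : ℂ) : ℂ :=
  if a - σ ^ 2 * d / 2 ≠ 0 then
    -((2 * a * θ / σ ^ 2 : ℝ) : ℂ) *
        Complex.log (1 - ((σ ^ 2 / (2 * a) : ℝ) : ℂ) * u * (1 - Complex.exp (-(a : ℂ) * t))) +
      ((c / (a - σ ^ 2 * d / 2) : ℝ) : ℂ) *
        Complex.log (((d : ℂ) - ((σ ^ 2 * d / (2 * a) : ℝ) : ℂ) * u +
            (((σ ^ 2 * d / (2 * a) : ℝ) : ℂ) - 1) * u * Complex.exp (-(a : ℂ) * t)) /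
          ((d : ℂ) - u))
  else
    -((2 * a * θ / σ ^ 2 : ℝ) : ℂ) *
        Complex.log (1 - ((σ ^ 2 / (2 * a) : ℝ) : ℂ) * u * (1 - Complex.exp (-(a : ℂ) * t))) +
      (c : ℂ) * u * (1 - Complex.exp (-(a : ℂ) * t)) / ((a : ℂ) * ((d : ℂ) - u))

theorem riccati_solution (a θ σ c d : ℝ) (ha : 0 < a) (hθ : 0 < θ) (hσ : 0 < σ)
    (hc : 0 < c) (hd : 0 < d) (u : ℂ) (hu : u.re ≤ 0) (t : ℝ) (ht : 0 ≤ t) :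
    riccatiPsi a σ 0 u = u ∧ riccatiPhi a θ σ c d 0 u = 0 ∧
      HasDerivAt (fun s => riccatiPsi a σ s u)
        ((σ : ℂ) ^ 2 / 2 * riccatiPsi a σ t u ^ 2 - (a : ℂ) * riccatiPsi a σ t u) t ∧
      HasDerivAt (fun s => riccatiPhi a θ σ c d s u)
        ((a : ℂ) * (θ : ℂ) * riccatiPsi a σ t u +
          (c : ℂ) * riccatiPsi a σ t u / ((d : ℂ) - riccatiPsi a σ t u)) t := by
  have ha' : (a : ℂ) ≠ 0 := Complex.ofReal_ne_zero.2 ha.ne'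
  have hσ' : (σ : ℂ) ≠ 0 := Complex.ofReal_ne_zero.2 hσ.ne'
  have hdu : (d : ℂ) - u ≠ 0 := by
    intro h
    have h2 : ((d : ℂ) - u).re = 0 := by rw [h]; simp
    simp [Complex.sub_re] at h2
    linarith
  set k : ℝ := σ ^ 2 / (2 * a) with hk
  have hkpos : 0 < k := by positivity
  set m : ℝ := σ ^ 2 * d / (2 * a) with hm
  have hmpos : 0 < m := by positivity
  have hmk : (m : ℂ) = (k : ℂ) * (d : ℂ) := by rw [hm, hk]; push_cast; ring
  set e : ℝ := Real.exp (-a * t) with he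
  have he0 : 0 < e := Real.exp_pos _
  have he1 : e ≤ 1 := by rw [he, ← Real.exp_zero]; exact Real.exp_le_exp.2 (by nlinarith)
  have hEt : Complex.exp (-(a : ℂ) * (t : ℝ)) = ((e : ℝ) : ℂ) := by
    rw [he, show -(a:ℂ) * (t:ℝ) = ((-a*t : ℝ) : ℂ) by push_cast; ring, Complex.ofReal_exp]
  have hDre : ((1:ℂ) - (k:ℂ) * u * (1 - (e:ℂ))).re = 1 - k * (1-e) * u.re := by
    simp [Complex.sub_re, Complex.mul_re, Complex.mul_im]; ring
  have hDrepos : 0 < ((1:ℂ) - (k:ℂ) * u * (1 - (e:ℂ))).re := by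
    rw [hDre]
    nlinarith [mul_nonneg (mul_nonneg hkpos.le (sub_nonneg.2 he1)) (neg_nonneg.2 hu)]
  have hDne : (1:ℂ) - (k:ℂ) * u * (1 - (e:ℂ)) ≠ 0 := by
    intro h; rw [h] at hDrepos; simp at hDrepos
  have hkC : (k : ℂ) = (σ:ℂ)^2 / (2*(a:ℂ)) := by rw [hk]; push_cast; ring
  have hmC : (m : ℂ) = (σ:ℂ)^2 * (d:ℂ) / (2*(a:ℂ)) := by rw [hm]; push_cast; ring
  have hNre : (((d:ℂ) - (m:ℂ) * u + ((m:ℂ) - 1) * u * (e:ℂ)).re)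
      = d - (m * (1-e) + e) * u.re := by
    simp [Complex.add_re, Complex.sub_re, Complex.mul_re, Complex.mul_im]; ring
  have hNrepos : 0 < ((d:ℂ) - (m:ℂ) * u + ((m:ℂ) - 1) * u * (e:ℂ)).re := by
    rw [hNre]
    nlinarith [mul_nonneg (mul_nonneg hmpos.le (sub_nonneg.2 he1)) (neg_nonneg.2 hu),
      mul_nonneg he0.le (neg_nonneg.2 hu)]
  have hNne : (d:ℂ) - (m:ℂ) * u + ((m:ℂ) - 1) * u * (e:ℂ) ≠ 0 := by
    intro h; rw [h] at hNrepos; simp at hNrepos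
  have hdure : 0 < ((d:ℂ) - u).re := by simp [Complex.sub_re]; linarith
  have hmemA : ((d:ℂ) - (m:ℂ) * u + ((m:ℂ) - 1) * u * (e:ℂ)) / ((d:ℂ) - u)
      ∈ Complex.slitPlane := by
    rw [Complex.mem_slitPlane_iff]
    by_contra hcon
    push_neg at hcon
    obtain ⟨h1, h2⟩ := hcon
    have hq : (d:ℂ) - (m:ℂ) * u + ((m:ℂ) - 1) * u * (e:ℂ)
        = (((d:ℂ) - (m:ℂ) * u + ((m:ℂ) - 1) * u * (e:ℂ)) / ((d:ℂ) - u)) * ((d:ℂ) - u) :=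
      (div_mul_cancel₀ _ hdu).symm
    have h3 := congrArg Complex.re hq
    rw [Complex.mul_re, h2] at h3
    simp at h3
    nlinarith [hNrepos, h3]
  have hdE : HasDerivAt (fun s : ℝ => Complex.exp (-(a:ℂ) * s)) (-(a:ℂ) * (e:ℂ)) t := by
    have h1 : HasDerivAt (fun z : ℂ => Complex.exp (-(a:ℂ) * z))
        (Complex.exp (-(a:ℂ) * ((t:ℝ):ℂ)) * -(a:ℂ)) ((t:ℝ):ℂ) := by
      simpa using ((hasDerivAt_id ((t:ℝ):ℂ)).const_mul (-(a:ℂ))).cexp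
    have h2 := h1.comp_ofReal
    rw [hEt] at h2
    convert h2 using 1; ring
  have den := ((hdE.const_sub 1).const_mul ((k:ℂ) * u)).const_sub 1
  have hψt : riccatiPsi a σ t u = u * (e:ℂ) / (1 - (k:ℂ) * u * (1 - (e:ℂ))) := by
    rw [riccatiPsi, hEt, ← hk]
  have hkne : (k:ℂ) ≠ 0 := Complex.ofReal_ne_zero.2 hkpos.ne'
  have hσk : (σ:ℂ)^2 = 2 * (a:ℂ) * (k:ℂ) := by rw [hkC]; field_simp
  have hC1 : ((2 * a * θ / σ ^ 2 : ℝ) : ℂ) = 2*(a:ℂ)*(θ:ℂ)/(σ:ℂ)^2 := by push_cast; ring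
  have hE0 : Complex.exp (-(a : ℂ) * ((0:ℝ) : ℂ)) = 1 := by norm_num
  have hmemD : (1:ℂ) - (k:ℂ) * u * (1 - Complex.exp (-(a:ℂ) * (t:ℝ))) ∈ Complex.slitPlane := by
    rw [hEt]; exact Complex.mem_slitPlane_iff.2 (Or.inl hDrepos)
  refine ⟨?_, ?_, ?_, ?_⟩
  · rw [riccatiPsi, hE0]
    simp
  · rw [riccatiPhi]
    split_ifs with h
    · rw [hE0]
      have h1 : ((d:ℂ) - ((σ ^ 2 * d / (2 * a) : ℝ) : ℂ) * u +
          (((σ ^ 2 * d / (2 * a) : ℝ) : ℂ) - 1) * u * 1) = (d:ℂ) - u := by ring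
      rw [h1, div_self hdu]
      simp
    · rw [hE0]
      simp
  · -- ψ derivative
    have num := hdE.const_mul u
    have hDneExp : (1:ℂ) - (k:ℂ) * u * (1 - Complex.exp (-(a:ℂ) * (t:ℝ))) ≠ 0 := by
      rw [hEt]; exact hDne
    have H := num.div den hDneExp
    beta_reduce at H
    rw [hEt] at H
    rw [hψt]
    simp only [riccatiPsi, ← hk]
    refine H.congr_deriv ?_
    rw [hσk]
    field_simp [hDne]
    ring
  · -- φ derivative
    rcases eq_or_ne (a - σ ^ 2 * d / 2) 0 with hΔ | hΔ
    · -- Δ = 0 case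
      have hkd : k * d = 1 := by rw [hk]; field_simp; linarith
      have hkdC : (k:ℂ) * (d:ℂ) = 1 := by
        have : ((k*d : ℝ) : ℂ) = ((1:ℝ):ℂ) := by rw [hkd]
        push_cast at this; simpa using this
      have hlog1 := (den.clog_real hmemD).const_mul (-((2 * a * θ / σ ^ 2 : ℝ) : ℂ))
      have hterm2 := ((hdE.const_sub 1).const_mul ((c:ℂ) * u)).div_const ((a:ℂ) * ((d:ℂ) - u))
      have H := hlog1.add hterm2
      beta_reduce at H
      rw [hEt] at H
      have hgoal : (fun s => riccatiPhi a θ σ c d s u)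
          = fun s : ℝ => -((2 * a * θ / σ ^ 2 : ℝ) : ℂ) *
              Complex.log (1 - (k:ℂ) * u * (1 - Complex.exp (-(a : ℂ) * s))) +
            (c : ℂ) * u * (1 - Complex.exp (-(a : ℂ) * s)) / ((a : ℂ) * ((d : ℂ) - u)) := by
        funext s
        rw [riccatiPhi, if_neg (by simpa using hΔ), ← hk]
      rw [hgoal, hψt]
      have hsub : (d:ℂ) - u * (e:ℂ) / (1 - (k:ℂ) * u * (1 - (e:ℂ)))
          = ((d:ℂ) - u) / (1 - (k:ℂ) * u * (1 - (e:ℂ))) := by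
        rw [eq_div_iff hDne]
        have hexp : ((d:ℂ) - u * (e:ℂ) / (1 - (k:ℂ) * u * (1 - (e:ℂ)))) * (1 - (k:ℂ) * u * (1 - (e:ℂ)))
            = (d:ℂ) * (1 - (k:ℂ) * u * (1 - (e:ℂ))) - u * (e:ℂ) := by
          rw [sub_mul, div_mul_cancel₀ _ hDne]
        rw [hexp]
        linear_combination (u * (e:ℂ) - u) * hkdC
      rw [hsub]
      refine H.congr_deriv ?_
      rw [hC1]
      congr 1
      · rw [hσk]
        field_simp [hDne, hkne]
      · field_simp [hDne, hdu, ha']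
        have hD' : (1 + u*(e:ℂ)*(k:ℂ) - u*(k:ℂ)) ≠ 0 := by
          intro h; apply hDne; linear_combination h
        linear_combination (-(c:ℂ)*u*(e:ℂ)) * mul_inv_cancel₀ hD'
    · -- Δ ≠ 0 case
      have hC2 : ((c / (a - σ ^ 2 * d / 2) : ℝ) : ℂ) = (c:ℂ) / ((a:ℂ) - (σ:ℂ)^2*(d:ℂ)/2) := by
        push_cast; ring
      have hΔ2 : (a:ℂ) - (σ:ℂ)^2*(d:ℂ)/2 = (a:ℂ) * (1 - (m:ℂ)) := by
        rw [hmC]; field_simp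
      have h1mR : 1 - m ≠ 0 := by
        rw [hm]; intro hmm; apply hΔ; field_simp at hmm ⊢; linarith
      have h1m : (1:ℂ) - (m:ℂ) ≠ 0 := by
        have : ((1 - m : ℝ) : ℂ) ≠ 0 := Complex.ofReal_ne_zero.2 h1mR
        push_cast at this; exact this
      have hmemA' : ((d:ℂ) - (m:ℂ) * u + ((m:ℂ) - 1) * u * Complex.exp (-(a:ℂ) * (t:ℝ))) / ((d:ℂ) - u)
          ∈ Complex.slitPlane := by
        rw [hEt]; exact hmemA
      have hlog1 := (den.clog_real hmemD).const_mul (-((2 * a * θ / σ ^ 2 : ℝ) : ℂ))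
      have hN := (hdE.const_mul (((m:ℂ) - 1) * u)).const_add ((d:ℂ) - (m:ℂ) * u)
      have hlog2 := ((hN.div_const ((d:ℂ) - u)).clog_real hmemA').const_mul
        ((c / (a - σ ^ 2 * d / 2) : ℝ) : ℂ)
      have H := hlog1.add hlog2
      beta_reduce at H
      rw [hEt] at H
      have hgoal : (fun s => riccatiPhi a θ σ c d s u)
          = fun s : ℝ => -((2 * a * θ / σ ^ 2 : ℝ) : ℂ) *
              Complex.log (1 - (k:ℂ) * u * (1 - Complex.exp (-(a : ℂ) * s))) +
            ((c / (a - σ ^ 2 * d / 2) : ℝ) : ℂ) *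
              Complex.log (((d : ℂ) - (m:ℂ) * u +
                  ((m:ℂ) - 1) * u * Complex.exp (-(a : ℂ) * s)) / ((d : ℂ) - u)) := by
        funext s
        rw [riccatiPhi, if_pos hΔ, ← hk, ← hm]
      rw [hgoal, hψt]
      have hsub2 : (d:ℂ) - u * (e:ℂ) / (1 - (k:ℂ) * u * (1 - (e:ℂ)))
          = ((d:ℂ) - (m:ℂ) * u + ((m:ℂ) - 1) * u * (e:ℂ)) / (1 - (k:ℂ) * u * (1 - (e:ℂ))) := by
        rw [eq_div_iff hDne]
        have hexp : ((d:ℂ) - u * (e:ℂ) / (1 - (k:ℂ) * u * (1 - (e:ℂ)))) * (1 - (k:ℂ) * u * (1 - (e:ℂ)))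
            = (d:ℂ) * (1 - (k:ℂ) * u * (1 - (e:ℂ))) - u * (e:ℂ) := by
          rw [sub_mul, div_mul_cancel₀ _ hDne]
        rw [hexp]
        linear_combination (u - u * (e:ℂ)) * hmk
      rw [hsub2]
      refine H.congr_deriv ?_
      rw [hC1, hC2, hΔ2]
      congr 1
      · rw [hσk]
        field_simp [hDne, hkne]
      · field_simp [hDne, hNne, hdu, ha', h1m]
        have hD' : (1 + u*(e:ℂ)*(k:ℂ) - u*(k:ℂ)) ≠ 0 := by
          intro h; apply hDne; linear_combination h
        linear_combination (-((c:ℂ)*u*(e:ℂ)*(1-(m:ℂ)))) * mul_inv_cancel₀ hD'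
end

section
/- Fix a, θ, σ, c, d > 0 and let p(t,x,y) be the BAJD transition density (as defined in the context). Then for every x > 0 and every m > 0, ∫_0^m ( ∫_0^∞ p(t,x,y) dt ) dy = ∞; that is, the expected occupation time of the compact set [0,m] by the BAJD started at x is infinite, so the BAJD is not uniformly transient. -/
open MeasureTheory Set

noncomputable section

lemma gammaFac_le {q : ℝ} (hq : 0 < q + 1) (k : ℕ) :
    Real.Gamma (q + 1) * (min 1 (q + 1)) ^ k * (Nat.factorial k) ≤ Real.Gamma (q + k + 1) := by
  induction k with
  | zero => simp
  | succ n ih =>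
    have hμ : 0 < min 1 (q + 1) := lt_min one_pos hq
    have hn : (0:ℝ) ≤ (n:ℝ) := Nat.cast_nonneg n
    have hqn : 0 < q + n + 1 := by linarith
    have hG : Real.Gamma (q + (n + 1 : ℕ) + 1) = (q + n + 1) * Real.Gamma (q + n + 1) := by
      have h := Real.Gamma_add_one hqn.ne'
      push_cast
      rw [show q + ((n:ℝ) + 1) + 1 = (q + ↑n + 1) + 1 by ring]
      exact h
    have hstep : min 1 (q + 1) * (n + 1 : ℝ) ≤ q + n + 1 := by
      have h1 : min 1 (q + 1) ≤ 1 := min_le_left _ _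
      have h2 : min 1 (q + 1) ≤ q + 1 := min_le_right _ _
      nlinarith
    have hGpos : 0 < Real.Gamma (q + n + 1) := Real.Gamma_pos_of_pos hqn
    have hfac : (0:ℝ) < Nat.factorial n := by exact_mod_cast Nat.factorial_pos n
    have h3 : Real.Gamma (q+1) * min 1 (q+1) ^ (n+1) * (Nat.factorial (n+1)) =
        (Real.Gamma (q+1) * min 1 (q+1) ^ n * Nat.factorial n) * (min 1 (q+1) * (n+1)) := by
      push_cast [Nat.factorial_succ]; ring
    rw [hG]
    push_cast at h3 ⊢
    rw [h3]
    have hLnn : 0 ≤ Real.Gamma (q+1) * min 1 (q+1) ^ n * (Nat.factorial n : ℝ) := by positivity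
    calc Real.Gamma (q+1) * min 1 (q+1) ^ n * (Nat.factorial n : ℝ) * (min 1 (q+1) * ((n:ℝ)+1))
        ≤ Real.Gamma (q + (n:ℝ) + 1) * (q + (n:ℝ) + 1) := by
          apply mul_le_mul ih hstep (by positivity) hGpos.le
      _ = (q + (n:ℝ) + 1) * Real.Gamma (q + (n:ℝ) + 1) := by ring

lemma besselSummable {q w : ℝ} (hq : 0 < q + 1) (hw : 0 ≤ w) :
    Summable fun k : ℕ => w ^ k / (Nat.factorial k * Real.Gamma (q + k + 1)) := by
  have hμ : 0 < min 1 (q + 1) := lt_min one_pos hq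
  have hGpos : 0 < Real.Gamma (q + 1) := Real.Gamma_pos_of_pos hq
  refine Summable.of_nonneg_of_le (g := fun k : ℕ => w ^ k / (Nat.factorial k * Real.Gamma (q + k + 1)))
    (f := fun k => (w / min 1 (q+1)) ^ k / Nat.factorial k * (Real.Gamma (q+1))⁻¹) ?_ ?_ ?_
  · intro k
    have : 0 < Real.Gamma (q + k + 1) := Real.Gamma_pos_of_pos (by have : (0:ℝ) ≤ k := Nat.cast_nonneg k; linarith)
    positivity
  · intro k
    have hfac : (0:ℝ) < Nat.factorial k := by exact_mod_cast Nat.factorial_pos k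
    have h1 : Real.Gamma (q+1) * min 1 (q+1) ^ k * Nat.factorial k ≤ Real.Gamma (q + k + 1) := gammaFac_le hq k
    have hd0 : 0 < Real.Gamma (q+1) * min 1 (q+1) ^ k * Nat.factorial k := by positivity
    calc w ^ k / (Nat.factorial k * Real.Gamma (q + k + 1))
        ≤ w ^ k / (Nat.factorial k * (Real.Gamma (q+1) * min 1 (q+1) ^ k * Nat.factorial k)) := by
          apply div_le_div_of_nonneg_left (by positivity) (by positivity)
          exact mul_le_mul_of_nonneg_left h1 hfac.le
      _ ≤ (w / min 1 (q+1)) ^ k / Nat.factorial k * (Real.Gamma (q+1))⁻¹ := by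
          rw [div_pow]
          rw [div_le_iff₀ (by positivity)] at *
          have hone : (1:ℝ) ≤ Nat.factorial k := by exact_mod_cast Nat.factorial_pos k
          have : w ^ k / min 1 (q+1) ^ k / Nat.factorial k * (Real.Gamma (q+1))⁻¹ *
              (Nat.factorial k * (Real.Gamma (q+1) * min 1 (q+1) ^ k * Nat.factorial k)) =
              w ^ k * Nat.factorial k := by
            field_simp
          rw [this]
          nlinarith [pow_nonneg hw k]
  · exact (Real.summable_pow_div_factorial _).mul_right _

lemma besselTsum_lb {q w : ℝ} (hq : 0 < q + 1) (hw : 0 ≤ w) :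
    (Real.Gamma (q + 1))⁻¹ ≤ ∑' k : ℕ, w ^ k / (Nat.factorial k * Real.Gamma (q + k + 1)) := by
  have h := Summable.le_tsum (besselSummable hq hw) 0 (fun i _ => by
    have : 0 < Real.Gamma (q + i + 1) := Real.Gamma_pos_of_pos (by have : (0:ℝ) ≤ i := Nat.cast_nonneg i; linarith)
    positivity)
  simpa using h

section BajdAux

open Real

lemma besselI1_nonneg' {r : ℝ} (hr : 0 ≤ r) : 0 ≤ besselI1 r := by
  unfold besselI1
  refine mul_nonneg (by linarith) (tsum_nonneg fun k => by positivity)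

lemma besselI_nonneg' {q r : ℝ} (hq : 0 < q + 1) (hr : 0 ≤ r) : 0 ≤ besselI q r := by
  unfold besselI
  refine mul_nonneg (Real.rpow_nonneg (by linarith) _) (tsum_nonneg fun k => ?_)
  have : 0 < Real.Gamma (q + k + 1) :=
    Real.Gamma_pos_of_pos (by have : (0:ℝ) ≤ k := Nat.cast_nonneg k; linarith)
  positivity

lemma gammaDens_nonneg' {k r x : ℝ} (hk : 0 < k) (hr : 0 < r) (hx : 0 ≤ x) :
    0 ≤ gammaDens k r x := by
  unfold gammaDens
  have h1 : 0 < Real.Gamma k := Real.Gamma_pos_of_pos hk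
  have h2 : (0:ℝ) ≤ r ^ k := Real.rpow_nonneg hr.le _
  have h3 : (0:ℝ) ≤ x ^ (k - 1) := Real.rpow_nonneg hx _
  positivity

lemma gMix_nonneg' {α β γ x : ℝ} (hα : 0 ≤ α) (hα1 : 0 < α + 1) (hβ : 0 < β) (hγ : 0 < γ)
    (hx : 0 ≤ x) : 0 ≤ gMix α β γ x := by
  unfold gMix
  refine tsum_nonneg fun k => mul_nonneg (div_nonneg ?_ ?_) ?_
  · have : 0 < Real.Gamma ((k + 1 : ℕ) + γ) :=
      Real.Gamma_pos_of_pos (by have : (0:ℝ) ≤ (k+1:ℕ) := Nat.cast_nonneg _; linarith)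
    exact mul_nonneg (pow_nonneg hα _) this.le
  · have h1 : (0:ℝ) ≤ (α + 1) ^ (((k + 1 : ℕ) : ℝ) + γ) := Real.rpow_nonneg hα1.le _
    have h2 : 0 < Real.Gamma γ := Real.Gamma_pos_of_pos hγ
    have h3 : (0:ℝ) < (Nat.factorial (k+1) : ℝ) := by exact_mod_cast Nat.factorial_pos _
    positivity
  · exact gammaDens_nonneg' (by positivity) hβ hx

lemma L1_pos {a σ d t : ℝ} (ha : 0 < a) (hσ : 0 < σ) (hd : 0 < d) (ht : 0 ≤ t) :
    min 1 (σ ^ 2 * d / (2 * a)) ≤ L1 a σ d t ∧ L1 a σ d t ≤ max 1 (σ ^ 2 * d / (2 * a)) := by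
  have hE0 : 0 < Real.exp (-a * t) := Real.exp_pos _
  have hE1 : Real.exp (-a * t) ≤ 1 := Real.exp_le_one_iff.mpr (by nlinarith)
  have hκ : 0 < σ ^ 2 * d / (2 * a) := by positivity
  unfold L1
  constructor
  · have h1 : min 1 (σ ^ 2 * d / (2 * a)) ≤ 1 := min_le_left _ _
    have h2 : min 1 (σ ^ 2 * d / (2 * a)) ≤ σ ^ 2 * d / (2 * a) := min_le_right _ _
    nlinarith
  · have h1 : (1:ℝ) ≤ max 1 (σ ^ 2 * d / (2 * a)) := le_max_left _ _
    have h2 : σ ^ 2 * d / (2 * a) ≤ max 1 (σ ^ 2 * d / (2 * a)) := le_max_right _ _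
    nlinarith

lemma cirDensity_nonneg' {a θ σ t x y : ℝ} (ha : 0 < a) (hθ : 0 < θ) (hσ : 0 < σ)
    (ht : 0 < t) (hx : 0 < x) (hy : 0 ≤ y) : 0 ≤ cirDensity a θ σ t x y := by
  have hE1 : Real.exp (-a * t) < 1 := Real.exp_lt_one_iff.mpr (by nlinarith)
  have hρ : 0 < 2 * a / (σ ^ 2 * (1 - Real.exp (-a * t))) := by
    have : 0 < 1 - Real.exp (-a * t) := by linarith
    positivity
  simp only [cirDensity, if_neg hx.ne']
  refine mul_nonneg (mul_nonneg (mul_nonneg hρ.le (Real.exp_pos _).le) ?_) ?_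
  · exact Real.rpow_nonneg (div_nonneg (by positivity) (by positivity)) _
  · refine besselI_nonneg' ?_ (by positivity)
    have : 0 < 2 * a * θ / σ ^ 2 := by positivity
    linarith

lemma bajdJump_nonneg' {a σ c d t z : ℝ} (ha : 0 < a) (hσ : 0 < σ) (hc : 0 < c) (hd : 0 < d)
    (ht : 0 < t) (hz : 0 ≤ z) : 0 ≤ bajdJump a σ c d t z := by
  have hL := L1_pos (a := a) (σ := σ) (d := d) (t := t) ha hσ hd ht.le
  have hLpos : 0 < L1 a σ d t :=
    lt_of_lt_of_le (lt_min one_pos (by positivity)) hL.1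
  unfold bajdJump
  split_ifs with h1 h2
  · -- Δ > 0 : σ²d/(2a) < 1
    have hκ : σ ^ 2 * d / (2 * a) ≤ 1 := by
      rw [div_le_one (by positivity)]; nlinarith
    have hL1le : L1 a σ d t ≤ 1 := le_trans hL.2 (by simp [max_eq_left hκ])
    have hαnn : 0 ≤ 1 / L1 a σ d t - 1 := by
      have : (1:ℝ) ≤ 1 / L1 a σ d t := by
        rw [le_div_iff₀ hLpos]; linarith
      linarith
    refine gMix_nonneg' hαnn (by positivity) (by positivity) (by positivity) hz
  · -- Δ < 0 : σ²d/(2a) > 1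
    have hκ : (1:ℝ) ≤ σ ^ 2 * d / (2 * a) := by
      rw [le_div_iff₀ (by positivity)]; nlinarith
    have hL1ge : 1 ≤ L1 a σ d t := le_trans (by simp [min_eq_left hκ]) hL.1
    have hγ : 0 < -c / (a - σ ^ 2 * d / 2) := div_pos_of_neg_of_neg (by linarith) h2
    exact gMix_nonneg' (by linarith) (by linarith) hd hγ hz
  · refine mul_nonneg (mul_nonneg (mul_nonneg hd.le (Real.exp_pos _).le)
      (Real.sqrt_nonneg _)) (besselI1_nonneg' (by positivity))

set_option maxHeartbeats 1000000 in
/-- Lower bound constant for the CIR density, valid for `t ≥ 1`. -/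
lemma cirDensity_lower {a θ σ x y t : ℝ} (ha : 0 < a) (hθ : 0 < θ) (hσ : 0 < σ)
    (hx : 0 < x) (hy : 0 < y) (ht : 1 ≤ t) :
    2 * a / σ ^ 2 *
        Real.exp (-(2 * a / (σ ^ 2 * (1 - Real.exp (-a))) * x +
          2 * a / (σ ^ 2 * (1 - Real.exp (-a))) * y)) *
        min ((2 * a / σ ^ 2 * y) ^ (2 * a * θ / σ ^ 2 - 1))
          ((2 * a / (σ ^ 2 * (1 - Real.exp (-a))) * y) ^ (2 * a * θ / σ ^ 2 - 1)) *
        (Real.Gamma (2 * a * θ / σ ^ 2))⁻¹ ≤ cirDensity a θ σ t x y := by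
  have ht0 : 0 < t := lt_of_lt_of_le one_pos ht
  have hEt1 : Real.exp (-a * t) < 1 := Real.exp_lt_one_iff.mpr (by nlinarith)
  have hEt0 : 0 < Real.exp (-a * t) := Real.exp_pos _
  have hEa1 : Real.exp (-a) < 1 := Real.exp_lt_one_iff.mpr (by linarith)
  have hEta : Real.exp (-a * t) ≤ Real.exp (-a) := Real.exp_le_exp.2 (by nlinarith)
  have h1a : 0 < 1 - Real.exp (-a) := by linarith
  have h1t : 0 < 1 - Real.exp (-a * t) := by linarith
  set q : ℝ := 2 * a * θ / σ ^ 2 - 1 with hqdef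
  have hq1 : q + 1 = 2 * a * θ / σ ^ 2 := by ring
  have hq1pos : 0 < q + 1 := by rw [hq1]; positivity
  set ρ : ℝ := 2 * a / (σ ^ 2 * (1 - Real.exp (-a * t))) with hρdef
  set ρp : ℝ := 2 * a / (σ ^ 2 * (1 - Real.exp (-a))) with hρpdef
  have hρpos : 0 < ρ := by rw [hρdef]; positivity
  have hρppos : 0 < ρp := by rw [hρpdef]; positivity
  have hρlo : 2 * a / σ ^ 2 ≤ ρ := by
    rw [hρdef]
    apply div_le_div_of_nonneg_left (by positivity) (by positivity)
    nlinarith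
  have hρhi : ρ ≤ ρp := by
    rw [hρdef, hρpdef]
    apply div_le_div_of_nonneg_left (by positivity) (by positivity)
    nlinarith
  set u : ℝ := ρ * x * Real.exp (-a * t) with hudef
  set v : ℝ := ρ * y with hvdef
  have hu : 0 < u := by rw [hudef]; positivity
  have hv : 0 < v := by rw [hvdef]; positivity
  have hcir : cirDensity a θ σ t x y =
      ρ * Real.exp (-u - v) * (v / u) ^ (q / 2) * besselI q (2 * Real.sqrt (u * v)) := by
    simp only [cirDensity, if_neg hx.ne']; rfl
  rw [hcir]
  -- rewrite the Bessel part
  have huv : (0:ℝ) ≤ u * v := (mul_pos hu hv).le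
  set S : ℝ := ∑' k : ℕ, (u * v) ^ k / (Nat.factorial k * Real.Gamma (q + k + 1)) with hSdef
  have hbes : (v / u) ^ (q / 2) * besselI q (2 * Real.sqrt (u * v)) = v ^ q * S := by
    rw [hSdef]
    unfold besselI
    have e1 : 2 * Real.sqrt (u * v) / 2 = Real.sqrt (u * v) := by ring
    have e2 : (2 * Real.sqrt (u * v)) ^ 2 / 4 = u * v := by
      rw [mul_pow, Real.sq_sqrt huv]; ring
    rw [e1, e2, Real.sqrt_eq_rpow]
    rw [← mul_assoc]
    congr 1
    rw [← Real.rpow_mul huv, show (1:ℝ) / 2 * q = q / 2 by ring,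
      ← Real.mul_rpow (div_nonneg hv.le hu.le) huv,
      show v / u * (u * v) = v ^ 2 by field_simp,
      show (v:ℝ) ^ (2:ℕ) = v ^ ((2:ℕ) : ℝ) from (Real.rpow_natCast v 2).symm,
      ← Real.rpow_mul hv.le]
    congr 1
    ring
  rw [mul_assoc (ρ * Real.exp (-u - v)), hbes, ← mul_assoc (ρ * Real.exp (-u - v))]
  have hS : (Real.Gamma (q + 1))⁻¹ ≤ S := besselTsum_lb hq1pos huv
  have hSnn : 0 ≤ Real.Gamma (q + 1) := (Real.Gamma_pos_of_pos hq1pos).le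
  rw [← hq1]
  have hE : Real.exp (-(ρp * x + ρp * y)) ≤ Real.exp (-u - v) := by
    apply Real.exp_le_exp.2
    have hux : u ≤ ρp * x := by
      have h₁ : ρ * x * Real.exp (-a * t) ≤ ρ * x * 1 :=
        mul_le_mul_of_nonneg_left hEt1.le (by positivity)
      have h₂ : ρ * x ≤ ρp * x := mul_le_mul_of_nonneg_right hρhi hx.le
      rw [hudef]; linarith
    have hvy : v ≤ ρp * y := by
      rw [hvdef]; exact mul_le_mul_of_nonneg_right hρhi hy.le
    linarith
  have hminnn : 0 ≤ min ((2 * a / σ ^ 2 * y) ^ q) ((ρp * y) ^ q) :=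
    le_min (Real.rpow_nonneg (by positivity) _) (Real.rpow_nonneg (by positivity) _)
  have hmin : min ((2 * a / σ ^ 2 * y) ^ q) ((ρp * y) ^ q) ≤ v ^ q := by
    rcases le_or_gt 0 q with hq | hq
    · refine le_trans (min_le_left _ _) (Real.rpow_le_rpow (by positivity) ?_ hq)
      rw [hvdef]; nlinarith
    · refine le_trans (min_le_right _ _)
        (Real.rpow_le_rpow_of_nonpos hv (by rw [hvdef]; nlinarith) hq.le)
  refine mul_le_mul (mul_le_mul (mul_le_mul hρlo hE (Real.exp_pos _).le hρpos.le)
    hmin hminnn (by positivity)) hS (by positivity) ?_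
  have : 0 ≤ v ^ q := Real.rpow_nonneg hv.le _
  positivity

end BajdAux

end

set_option maxHeartbeats 1000000 in
theorem bajd_not_uniformly_transient (a θ σ c d : ℝ) (ha : 0 < a) (hθ : 0 < θ)
    (hσ : 0 < σ) (hc : 0 < c) (hd : 0 < d) (x : ℝ) (hx : 0 < x) (m : ℝ) (hm : 0 < m) :
    ∫⁻ y in Set.Ioc (0 : ℝ) m,
      ∫⁻ t in Set.Ioi (0 : ℝ), ENNReal.ofReal (bajdDensity a θ σ c d t x y) = ⊤ := by
  -- uniform lower bound on the prefactor
  obtain ⟨K, hK, hKle⟩ : ∃ K > 0, ∀ t : ℝ, 0 ≤ t →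
      K ≤ (if a - σ ^ 2 * d / 2 = 0 then Real.exp (-((c / a) * (1 - Real.exp (-a * t))))
        else L1 a σ d t ^ (c / (a - σ ^ 2 * d / 2))) := by
    by_cases h0 : a - σ ^ 2 * d / 2 = 0
    · refine ⟨Real.exp (-(c / a)), Real.exp_pos _, fun t ht => ?_⟩
      rw [if_pos h0]
      apply Real.exp_le_exp.2
      have hE0 : 0 < Real.exp (-a * t) := Real.exp_pos _
      have hE1 : Real.exp (-a * t) ≤ 1 := Real.exp_le_one_iff.mpr (by nlinarith)
      have hca : 0 ≤ c / a := by positivity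
      nlinarith
    · have hminpos : 0 < min 1 (σ ^ 2 * d / (2 * a)) := lt_min one_pos (by positivity)
      rcases le_or_gt 0 (c / (a - σ ^ 2 * d / 2)) with he | he
      · refine ⟨min 1 (σ ^ 2 * d / (2 * a)) ^ (c / (a - σ ^ 2 * d / 2)),
          Real.rpow_pos_of_pos hminpos _, fun t ht => ?_⟩
        rw [if_neg h0]
        exact Real.rpow_le_rpow hminpos.le (L1_pos ha hσ hd ht).1 he
      · refine ⟨max 1 (σ ^ 2 * d / (2 * a)) ^ (c / (a - σ ^ 2 * d / 2)),
          Real.rpow_pos_of_pos (lt_of_lt_of_le one_pos (le_max_left _ _)) _, fun t ht => ?_⟩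
        rw [if_neg h0]
        exact Real.rpow_le_rpow_of_nonpos (lt_of_lt_of_le hminpos (L1_pos ha hσ hd ht).1)
          (L1_pos ha hσ hd ht).2 he.le
  have key : ∀ y : ℝ, 0 < y →
      ∫⁻ t in Set.Ioi (0 : ℝ), ENNReal.ofReal (bajdDensity a θ σ c d t x y) = ⊤ := by
    intro y hy
    have hEa1 : Real.exp (-a) < 1 := Real.exp_lt_one_iff.mpr (by linarith)
    set εc : ℝ := 2 * a / σ ^ 2 *
        Real.exp (-(2 * a / (σ ^ 2 * (1 - Real.exp (-a))) * x +
          2 * a / (σ ^ 2 * (1 - Real.exp (-a))) * y)) *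
        min ((2 * a / σ ^ 2 * y) ^ (2 * a * θ / σ ^ 2 - 1))
          ((2 * a / (σ ^ 2 * (1 - Real.exp (-a))) * y) ^ (2 * a * θ / σ ^ 2 - 1)) *
        (Real.Gamma (2 * a * θ / σ ^ 2))⁻¹ with hεcdef
    have h1a : 0 < 1 - Real.exp (-a) := by linarith
    have hεcpos : 0 < εc := by
      rw [hεcdef]
      have hG : 0 < Real.Gamma (2 * a * θ / σ ^ 2) := Real.Gamma_pos_of_pos (by positivity)
      have hm1 : 0 < (2 * a / σ ^ 2 * y) ^ (2 * a * θ / σ ^ 2 - 1) :=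
        Real.rpow_pos_of_pos (by positivity) _
      have hm2 : 0 < (2 * a / (σ ^ 2 * (1 - Real.exp (-a))) * y) ^ (2 * a * θ / σ ^ 2 - 1) :=
        Real.rpow_pos_of_pos (by positivity) _
      have := lt_min hm1 hm2
      positivity
    have hbound : ∀ t : ℝ, 1 ≤ t → K * εc ≤ bajdDensity a θ σ c d t x y := by
      intro t ht
      have ht0 : 0 < t := lt_of_lt_of_le one_pos ht
      have h1 : K * εc ≤ (if a - σ ^ 2 * d / 2 = 0 then
            Real.exp (-((c / a) * (1 - Real.exp (-a * t))))
          else L1 a σ d t ^ (c / (a - σ ^ 2 * d / 2))) * cirDensity a θ σ t x y :=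
        mul_le_mul (hKle t ht0.le) (cirDensity_lower ha hθ hσ hx hy ht) hεcpos.le
          (le_trans hK.le (hKle t ht0.le))
      have h2 : 0 ≤ ∫ z in (0:ℝ)..y, cirDensity a θ σ t x (y - z) * bajdJump a σ c d t z := by
        apply intervalIntegral.integral_nonneg hy.le
        intro z hz
        exact mul_nonneg (cirDensity_nonneg' ha hθ hσ ht0 hx (by linarith [hz.2]))
          (bajdJump_nonneg' ha hσ hc hd ht0 hz.1)
      unfold bajdDensity
      linarith
    refine eq_top_iff.2 ?_
    calc (⊤ : ENNReal) = ∫⁻ _ in Set.Ioi (1:ℝ), ENNReal.ofReal (K * εc) := by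
          rw [setLIntegral_const, Real.volume_Ioi, ENNReal.mul_top]
          exact (ENNReal.ofReal_pos.2 (by positivity)).ne'
      _ ≤ ∫⁻ t in Set.Ioi (1:ℝ), ENNReal.ofReal (bajdDensity a θ σ c d t x y) := by
          refine lintegral_mono_ae ((ae_restrict_iff' measurableSet_Ioi).2
            (ae_of_all _ fun t ht => ENNReal.ofReal_le_ofReal (hbound t ht.le)))
      _ ≤ ∫⁻ t in Set.Ioi (0:ℝ), ENNReal.ofReal (bajdDensity a θ σ c d t x y) :=
          lintegral_mono_set (Set.Ioi_subset_Ioi zero_le_one)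
  rw [setLIntegral_congr_fun measurableSet_Ioc (fun y hy => key y hy.1),
    setLIntegral_const, Real.volume_Ioc, ENNReal.top_mul]
  exact (ENNReal.ofReal_pos.2 (by linarith)).ne'
end

section
/- Fix a, θ, σ, c, d > 0. There exists γ ∈ (0, d) such that the function V(x) = e^{γx} is a Foster–Lyapunov function for the BAJD generator: there exist constants k, M ∈ (0,∞) such that for all x ≥ 0, 𝒜V(x) := (1/2)σ²γ²x e^{γx} + (aθ − ax)γ e^{γx} + cd ∫_0^∞ (e^{γ(x+y)} − e^{γx}) e^{−dy} dy ≤ −k V(x) + M. -/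
open MeasureTheory Set

set_option maxHeartbeats 1000000 in
theorem bajd_foster_lyapunov (a θ σ c d : ℝ) (ha : 0 < a) (hθ : 0 < θ) (hσ : 0 < σ)
    (hc : 0 < c) (hd : 0 < d) :
    ∃ γ ∈ Set.Ioo (0 : ℝ) d, ∃ k M : ℝ, 0 < k ∧ 0 < M ∧
      ∀ x : ℝ, 0 ≤ x →
        1 / 2 * σ ^ 2 * γ ^ 2 * x * Real.exp (γ * x) +
            (a * θ - a * x) * γ * Real.exp (γ * x) +
            c * d * ∫ y in Set.Ioi (0 : ℝ),
              (Real.exp (γ * (x + y)) - Real.exp (γ * x)) * Real.exp (-d * y) ≤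
          -k * Real.exp (γ * x) + M := by
  have hσ2 : (0:ℝ) < σ ^ 2 := by positivity
  set γ : ℝ := min (a / σ ^ 2) (d / 2) with hγdef
  have hγ0 : 0 < γ := lt_min (by positivity) (by positivity)
  have hγd : γ < d := lt_of_le_of_lt (min_le_right _ _) (by linarith)
  have hdγ : 0 < d - γ := by linarith
  have hσγ : σ ^ 2 * γ ≤ a := by
    have h1 : γ ≤ a / σ ^ 2 := min_le_left _ _
    calc σ ^ 2 * γ ≤ σ ^ 2 * (a / σ ^ 2) := by nlinarith
      _ = a := by field_simp
  set C : ℝ := a * θ * γ + c * γ / (d - γ) with hCdef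
  have hC0 : 0 < C := by
    have h1 : 0 < c * γ / (d - γ) := by positivity
    have h2 : 0 < a * θ * γ := by positivity
    rw [hCdef]; linarith
  set b : ℝ := a * γ / 2 with hbdef
  have hb : 0 < b := by positivity
  set x₀ : ℝ := (C + 1) / b with hx0def
  refine ⟨γ, ⟨hγ0, hγd⟩, 1, Real.exp (γ * x₀) * (C + 1), one_pos,
    mul_pos (Real.exp_pos _) (by linarith), ?_⟩
  intro x hx
  have hE : 0 < Real.exp (γ * x) := Real.exp_pos _
  -- auxiliary: value of exponential integrals
  have hexp : ∀ r : ℝ, 0 < r → ∫ y in Set.Ioi (0:ℝ), Real.exp (-(r * y)) = 1 / r := by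
    intro r hr
    have h := MeasureTheory.integral_comp_mul_left_Ioi (fun u => Real.exp (-u)) 0 hr
    simp only [mul_zero, integral_exp_neg_Ioi, smul_eq_mul, Real.exp_zero, mul_one,
      neg_zero] at h
    rw [h, one_div]
  have hint1 : IntegrableOn (fun y => Real.exp (γ * x) * Real.exp (-((d - γ) * y)))
      (Set.Ioi (0:ℝ)) := by
    have h := exp_neg_integrableOn_Ioi 0 hdγ
    simp only [neg_mul] at h ⊢
    exact h.const_mul _
  have hint2 : IntegrableOn (fun y => Real.exp (γ * x) * Real.exp (-(d * y)))
      (Set.Ioi (0:ℝ)) := by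
    have h := exp_neg_integrableOn_Ioi 0 hd
    simp only [neg_mul] at h ⊢
    exact h.const_mul _
  have hI : (∫ y in Set.Ioi (0:ℝ),
      (Real.exp (γ * (x + y)) - Real.exp (γ * x)) * Real.exp (-d * y))
      = Real.exp (γ * x) * (1 / (d - γ) - 1 / d) := by
    have hfun : ∀ y : ℝ, (Real.exp (γ * (x + y)) - Real.exp (γ * x)) * Real.exp (-d * y)
        = Real.exp (γ * x) * Real.exp (-((d - γ) * y))
          - Real.exp (γ * x) * Real.exp (-(d * y)) := by
      intro y
      rw [sub_mul, ← Real.exp_add, ← Real.exp_add, ← Real.exp_add, ← Real.exp_add]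
      congr 1 <;> exact congrArg Real.exp (by ring)
    rw [MeasureTheory.setIntegral_congr_fun measurableSet_Ioi (fun y _ => hfun y),
      MeasureTheory.integral_sub hint1 hint2, MeasureTheory.integral_const_mul,
      MeasureTheory.integral_const_mul, hexp _ hdγ, hexp _ hd]
    ring
  rw [hI]
  have hcd : c * d * (1 / (d - γ) - 1 / d) = c * γ / (d - γ) := by
    field_simp
    ring
  have h2 : 1 / 2 * σ ^ 2 * γ ^ 2 * x + (a * θ - a * x) * γ + c * γ / (d - γ) + 1
      ≤ C + 1 - b * x := by
    have h3 := mul_le_mul_of_nonneg_right hσγ (mul_nonneg hγ0.le hx)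
    rw [hCdef, hbdef]
    nlinarith
  have h3 : Real.exp (γ * x) * (C + 1 - b * x) ≤ Real.exp (γ * x₀) * (C + 1) := by
    rcases le_or_gt (C + 1 - b * x) 0 with h | h
    · have := mul_nonpos_of_nonneg_of_nonpos hE.le h
      nlinarith [Real.exp_pos (γ * x₀)]
    · have hxx : x ≤ x₀ := by
        rw [hx0def, le_div_iff₀ hb]
        linarith
      have hbx : 0 ≤ b * x := mul_nonneg hb.le hx
      exact mul_le_mul (Real.exp_le_exp.mpr (mul_le_mul_of_nonneg_left hxx hγ0.le))
        (by linarith) h.le (Real.exp_pos _).le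
  calc 1 / 2 * σ ^ 2 * γ ^ 2 * x * Real.exp (γ * x) +
        (a * θ - a * x) * γ * Real.exp (γ * x) +
        c * d * (Real.exp (γ * x) * (1 / (d - γ) - 1 / d))
      = Real.exp (γ * x) * (1 / 2 * σ ^ 2 * γ ^ 2 * x + (a * θ - a * x) * γ +
          c * d * (1 / (d - γ) - 1 / d)) := by ring
    _ = Real.exp (γ * x) * (1 / 2 * σ ^ 2 * γ ^ 2 * x + (a * θ - a * x) * γ +
          c * γ / (d - γ)) := by rw [hcd]
    _ ≤ Real.exp (γ * x) * (C + 1 - b * x) - Real.exp (γ * x) := by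
        nlinarith [mul_le_mul_of_nonneg_left h2 hE.le]
    _ ≤ -1 * Real.exp (γ * x) + Real.exp (γ * x₀) * (C + 1) := by nlinarith
end
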